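/- arXiv:2503.20620 — 7 statements merged into one kernel-verified Lean document; each statement's English description precedes it below -/
import Mathlib

section
/- Let V be a type, T : SimpleGraph V a tree, and let a group G act on V so that each g ∈ G is an automorphism of T. Let g, h ∈ G be elements each fixing some vertex of T, and define the stable fixed-point sets Fix^∞(g) = {v ∈ V : ∃ n ≠ 0, gⁿ·v = v} and Fix^∞(h) = {v ∈ V : ∃ n ≠ 0, hⁿ·v = v}. If Fix^∞(g) ∩ Fix^∞(h) = ∅, then the subgroup generated by g and h is the free product of ⟨g⟩ and ⟨h⟩: the canonical homomorphism from the free product of the subgroups Subgroup.zpowers g and Subgroup.zpowers h to G, induced by the inclusions, is injective. -/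
open SimpleGraph Walk

/-- `x` and `y` freely generate a free subgroup of rank 2. -/
def FreelyGenerateF2 {G : Type*} [Group G] (x y : G) : Prop :=
  Function.Injective (FreeGroup.lift (fun i : Fin 2 => if i = 0 then x else y) :
    FreeGroup (Fin 2) →* G)

/-- `G` satisfies the power alternative. -/
def PowerAlternative (G : Type*) [Group G] : Prop :=
  ∀ g h : G, ∃ n : ℕ, 1 ≤ n ∧ (Commute (g ^ n) (h ^ n) ∨ FreelyGenerateF2 (g ^ n) (h ^ n))

/-- `G` satisfies the power alternative with uniform exponent `n`. -/
def UniformPowerAlternative (G : Type*) [Group G] (n : ℕ) : Prop :=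
  ∀ g h : G, Commute (g ^ n) (h ^ n) ∨ FreelyGenerateF2 (g ^ n) (h ^ n)

/-- The action of `G` on `V` is by automorphisms of the graph `T`. -/
def ActsByGraphAutomorphisms (G : Type*) {V : Type*} [Group G] [MulAction G V]
    (T : SimpleGraph V) : Prop :=
  ∀ (g : G) (u v : V), T.Adj (g • u) (g • v) ↔ T.Adj u v

/-- The action of `G` on the graph `T` is acylindrical in Sela's sense: pointwise
stabilisers of pairs of vertices at distance more than `K` have at most `c` elements. -/
def SelaAcylindrical (G : Type*) {V : Type*} [Group G] [MulAction G V]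
    (T : SimpleGraph V) : Prop :=
  ∃ K c : ℕ, ∀ u v : V, K < T.dist u v →
    {g : G | g • u = u ∧ g • v = v}.Finite ∧ {g : G | g • u = u ∧ g • v = v}.ncard ≤ c

namespace TreeAux3

variable {V : Type*} {T : SimpleGraph V}

def Btwn (T : SimpleGraph V) (c u v : V) : Prop :=
  T.dist u c + T.dist c v = T.dist u v

lemma path_length_eq (ht : T.IsTree) {u v : V} {p : T.Walk u v} (hp : p.IsPath) :
    p.length = T.dist u v := by
  obtain ⟨q, hq, hqlen⟩ := ht.isConnected.exists_path_of_dist u v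
  have : (⟨p, hp⟩ : T.Path u v) = ⟨q, hq⟩ := ht.IsAcyclic.path_unique _ _
  rw [show p = q from congrArg Subtype.val this, hqlen]

lemma btw_of_mem_support (ht : T.IsTree) {u v c : V} {p : T.Walk u v} (hp : p.IsPath)
    (hc : c ∈ p.support) : Btwn T c u v := by
  classical
  have hsplit := p.take_spec hc
  have h1 : (p.takeUntil c hc).IsPath := hp.takeUntil hc
  have h2 : (p.dropUntil c hc).IsPath := hp.dropUntil hc
  have := congrArg Walk.length hsplit
  rw [Walk.length_append] at this
  unfold Btwn
  rw [← path_length_eq ht h1, ← path_length_eq ht h2, this, path_length_eq ht hp]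

lemma mem_support_of_btw (ht : T.IsTree) {u v c : V} (hbtw : Btwn T c u v)
    {p : T.Walk u v} (hp : p.IsPath) : c ∈ p.support := by
  obtain ⟨p1, hp1, hl1⟩ := ht.isConnected.exists_path_of_dist u c
  obtain ⟨p2, hp2, hl2⟩ := ht.isConnected.exists_path_of_dist c v
  have hlen : (p1.append p2).length = T.dist u v := by
    rw [Walk.length_append, hl1, hl2, hbtw]
  have hpath : (p1.append p2).IsPath := Walk.isPath_of_length_eq_dist _ hlen
  have : (⟨p1.append p2, hpath⟩ : T.Path u v) = ⟨p, hp⟩ := ht.IsAcyclic.path_unique _ _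
  have hc : c ∈ (p1.append p2).support := by
    rw [Walk.mem_support_append_iff]; exact Or.inl (Walk.end_mem_support p1)
  rwa [show p1.append p2 = p from congrArg Subtype.val this] at hc

lemma btw_unique (ht : T.IsTree) {u v c c' : V} (h1 : Btwn T c u v) (h2 : Btwn T c' u v)
    (hd : T.dist u c = T.dist u c') : c = c' := by
  classical
  obtain ⟨p, hp, _⟩ := ht.isConnected.exists_path_of_dist u v
  have hc := mem_support_of_btw ht h1 hp
  have hc' := mem_support_of_btw ht h2 hp
  have key : ∀ x (hx : x ∈ p.support), x = p.getVert (T.dist u x) := by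
    intro x hx
    have hsplit := p.take_spec hx
    have hlen : (p.takeUntil x hx).length = T.dist u x :=
      path_length_eq ht (hp.takeUntil hx)
    have hgv := congrArg (fun w : T.Walk u v => w.getVert (T.dist u x)) hsplit
    simp only [Walk.getVert_append, hlen] at hgv
    rw [← hgv]
    simp
  rw [key c hc, key c' hc', hd]

lemma exists_first_hit {u v : V} (P : T.Walk u v) (S : Set V) (hv : v ∈ S) :
    ∃ c, c ∈ S ∧ ∃ (P1 : T.Walk u c) (P2 : T.Walk c v),
      P1.append P2 = P ∧ ∀ x ∈ P1.support, x ∈ S → x = c := by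
  induction P with
  | nil =>
    exact ⟨_, hv, Walk.nil, Walk.nil, rfl, fun x hx _ => by simpa using hx⟩
  | @cons a b w hadj P ih =>
    by_cases ha : a ∈ S
    · exact ⟨a, ha, Walk.nil, Walk.cons hadj P, rfl, fun x hx _ => by simpa using hx⟩
    · obtain ⟨c, hcS, P1, P2, hsplit, hfirst⟩ := ih hv
      refine ⟨c, hcS, Walk.cons hadj P1, P2, by rw [Walk.cons_append, hsplit], ?_⟩
      intro x hx hxS
      simp only [Walk.support_cons, List.mem_cons] at hx
      rcases hx with rfl | hx
      · exact absurd hxS ha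
      · exact hfirst x hx hxS

lemma exists_median (ht : T.IsTree) (u v w : V) :
    ∃ c, Btwn T c u v ∧ Btwn T c v w ∧ Btwn T c u w := by
  classical
  obtain ⟨P, hP, _⟩ := ht.isConnected.exists_path_of_dist u v
  obtain ⟨R, hR, _⟩ := ht.isConnected.exists_path_of_dist v w
  obtain ⟨c, hcR, P1, P2, hsplit, hfirst⟩ :=
    exists_first_hit P {x | x ∈ R.support} R.start_mem_support
  have hcR' : c ∈ R.support := hcR
  have hPP : (P1.append P2).IsPath := by rw [hsplit]; exact hP
  have hP1 : P1.IsPath := hPP.of_append_left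
  have hP2 : P2.IsPath := hPP.of_append_right
  refine ⟨c, ?_, btw_of_mem_support ht hR hcR', ?_⟩
  · unfold Btwn
    rw [← path_length_eq ht hP1, ← path_length_eq ht hP2, ← Walk.length_append, hsplit,
      path_length_eq ht hP]
  · set D := R.dropUntil c hcR' with hD
    have hDpath : D.IsPath := hR.dropUntil hcR'
    have hQ : (P1.append D).IsPath := by
      rw [Walk.isPath_def, Walk.support_append, List.nodup_append]
      refine ⟨hP1.support_nodup, hDpath.support_nodup.tail, ?_⟩
      intro x hx y hx' hxy
      subst hxy
      have hxD : x ∈ D.support := List.mem_of_mem_tail hx'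
      have hxR : x ∈ R.support := R.support_dropUntil_subset hcR' hxD
      have hxc : x = c := hfirst x hx hxR
      subst hxc
      have : D.support = x :: D.support.tail := D.support_eq_cons
      have hnd := hDpath.support_nodup
      rw [this] at hnd
      exact (List.nodup_cons.mp hnd).1 hx'
    unfold Btwn
    rw [← path_length_eq ht hP1, ← path_length_eq ht hDpath, ← Walk.length_append,
      path_length_eq ht hQ]

lemma btw_ord (ht : T.IsTree) {x q c f : V} (h1 : Btwn T c x q) (h2 : Btwn T f x q)
    (hle : T.dist x c ≤ T.dist x f) : Btwn T c x f := by
  classical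
  obtain ⟨P, hP, _⟩ := ht.isConnected.exists_path_of_dist x q
  have hcP := mem_support_of_btw ht h1 hP
  have hfP := mem_support_of_btw ht h2 hP
  have hsplit := P.take_spec hfP
  have hA : (P.takeUntil f hfP).IsPath := hP.takeUntil hfP
  have hB : (P.dropUntil f hfP).IsPath := hP.dropUntil hfP
  have hmem : c ∈ (P.takeUntil f hfP).support ∨ c ∈ (P.dropUntil f hfP).support := by
    have hsupp := congrArg Walk.support hsplit
    have : c ∈ ((P.takeUntil f hfP).append (P.dropUntil f hfP)).support := by
      rw [hsupp]; exact hcP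
    rwa [Walk.mem_support_append_iff] at this
  rcases hmem with hcA | hcB
  · exact btw_of_mem_support ht hA hcA
  · have hbfc : Btwn T c f q := btw_of_mem_support ht hB hcB
    have e1 : T.dist f c + T.dist c q = T.dist f q := hbfc
    have e2 : T.dist x f + T.dist f q = T.dist x q := h2
    have e3 : T.dist x c + T.dist c q = T.dist x q := h1
    have hfc : T.dist f c = 0 := by omega
    have : f = c := (ht.isConnected.dist_eq_zero_iff).mp hfc
    subst this
    unfold Btwn
    omega

variable {G : Type*} [Group G] [MulAction G V]


lemma dist_smul_eq (ht : T.IsTree)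
    (haut : ∀ (s : G) (u v : V), T.Adj (s • u) (s • v) ↔ T.Adj u v)
    (s : G) (u v : V) : T.dist (s • u) (s • v) = T.dist u v := by
  have key : ∀ (t : G) (a b : V), T.dist (t • a) (t • b) ≤ T.dist a b := by
    intro t a b
    obtain ⟨p, hp, hl⟩ := ht.isConnected.exists_path_of_dist a b
    let φ : T →g T := ⟨fun x => t • x, fun h => (haut t _ _).mpr h⟩
    have := SimpleGraph.dist_le (p.map φ)
    rwa [Walk.length_map, hl] at this
  refine le_antisymm (key s u v) ?_
  have := key s⁻¹ (s • u) (s • v)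
  rwa [inv_smul_smul, inv_smul_smul] at this

lemma key_step (ht : T.IsTree)
    (haut : ∀ (s : G) (u v : V), T.Adj (s • u) (s • v) ↔ T.Adj u v)
    {A B : Set V} {p q : V} (hpA : p ∈ A) (hqB : q ∈ B)
    (hAB : ∀ x, x ∈ A → x ∈ B → False)
    (hBR : ∀ x ∈ A, ∀ y ∈ B, T.dist x y = T.dist x p + T.dist p q + T.dist q y)
    (a : G) (hafix : ∀ x : V, a • x = x → x ∈ A) (hane : ∃ x : V, a • x = x)
    (v : V) (hSB : ∀ x ∈ A, T.dist v x = T.dist v q + T.dist p q + T.dist p x) :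
    (∀ y ∈ B, T.dist (a • v) y = T.dist (a • v) p + T.dist p q + T.dist q y) ∧
      T.dist p q ≤ T.dist (a • v) p := by
  have dS : ∀ (t : G) (x y : V), T.dist (t • x) (t • y) = T.dist x y := dist_smul_eq ht haut
  have com : ∀ x y : V, T.dist x y = T.dist y x := fun x y => SimpleGraph.dist_comm
  have hconn := ht.isConnected
  -- fixed points of a are "convex"
  have conv : ∀ u v' c : V, a • u = u → a • v' = v' → Btwn T c u v' → a • c = c := by
    intro u v' c hu hv hbtw
    have h1 : Btwn T (a • c) u v' := by
      unfold Btwn at *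
      calc T.dist u (a • c) + T.dist (a • c) v'
          = T.dist (a • u) (a • c) + T.dist (a • c) (a • v') := by rw [hu, hv]
        _ = T.dist u c + T.dist c v' := by rw [dS, dS]
        _ = T.dist u v' := hbtw
    have h2 : T.dist u (a • c) = T.dist u c := by
      conv_lhs => rw [← hu]
      exact dS a u c
    exact btw_unique ht h1 hbtw h2
  -- projection r of v onto the fixed set of a
  obtain ⟨r, hra, hrd⟩ : ∃ r, a • r = r ∧ T.dist v r = sInf {n : ℕ | ∃ x, a • x = x ∧ T.dist v x = n} := by
    have hSne : {n : ℕ | ∃ x, a • x = x ∧ T.dist v x = n}.Nonempty :=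
      ⟨T.dist v hane.choose, hane.choose, hane.choose_spec, rfl⟩
    obtain ⟨x, hx, hdx⟩ := Nat.sInf_mem hSne
    exact ⟨x, hx, hdx⟩
  have hrmin : ∀ x, a • x = x → T.dist v r ≤ T.dist v x := by
    intro x hx
    rw [hrd]
    exact Nat.sInf_le ⟨x, hx, rfl⟩
  have hproj : ∀ x, a • x = x → Btwn T r v x := by
    intro x hx
    obtain ⟨c, hc1, hc2, hc3⟩ := exists_median ht v r x
    have hcF : a • c = c := conv r x c hra hx hc2
    have hle := hrmin c hcF
    have hcr : T.dist c r = 0 := by unfold Btwn at hc1; omega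
    have : c = r := hconn.dist_eq_zero_iff.mp hcr
    subst this
    exact hc3
  have hrA : r ∈ A := hafix r hra
  -- key reflection fact
  have hdr : T.dist r (a • v) = T.dist r v := by
    conv_lhs => rw [← hra]
    exact dS a r v
  have hKbtw : Btwn T r v (a • v) := by
    obtain ⟨c, hc1, hc2, hc3⟩ := exists_median ht v r (a • v)
    have e1 : T.dist v (a⁻¹ • c) = T.dist (a • v) c := by
      rw [← dS a v (a⁻¹ • c), smul_inv_smul]
    have e2 : T.dist (a⁻¹ • c) r = T.dist c r := by
      rw [← dS a (a⁻¹ • c) r, smul_inv_smul, hra]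
    have hc2' : Btwn T (a⁻¹ • c) v r := by
      unfold Btwn at hc2 ⊢
      rw [e1, e2]
      have c1 := com r c
      have c2 := com c (a • v)
      have c3 := com r (a • v)
      have c4 := com r v
      omega
    have hvc : T.dist v c = T.dist v (a⁻¹ • c) := by
      unfold Btwn at hc1 hc2'
      omega
    have hfix : a • c = c := by
      have h' : c = a⁻¹ • c := btw_unique ht hc1 hc2' hvc
      have h'' := congrArg (fun z => a • z) h'
      simpa using h''
    have hpc := hproj c hfix
    have hcr : T.dist c r = 0 := by unfold Btwn at hc1 hpc; omega
    have : c = r := hconn.dist_eq_zero_iff.mp hcr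
    subst this
    exact hc3
  -- basic distance facts
  have hvp : T.dist v p = T.dist v q + T.dist p q := by
    have := hSB p hpA
    rw [SimpleGraph.dist_self] at this
    omega
  have hvr : T.dist v r = T.dist v q + T.dist p q + T.dist p r := hSB r hrA
  have hrq : T.dist r q = T.dist r p + T.dist p q := by
    have := hBR r hrA q hqB
    rw [SimpleGraph.dist_self] at this
    omega
  -- legs lemma
  have legs : ∀ x x', Btwn T x r v → Btwn T x' r (a • v) →
      T.dist x x' = T.dist x r + T.dist r x' := by
    intro x x' h1 h2
    unfold Btwn at h1 h2 hKbtw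
    have t1 : T.dist v (a • v) ≤ T.dist v x + T.dist x (a • v) := hconn.dist_triangle
    have t2 : T.dist x (a • v) ≤ T.dist x x' + T.dist x' (a • v) := hconn.dist_triangle
    have t3 : T.dist x x' ≤ T.dist x r + T.dist r x' := hconn.dist_triangle
    have c1 := com r x
    have c2 := com x v
    have c3 := com r x'
    have c4 := com v r
    omega
  have hbtwpvr : Btwn T p r v := by
    unfold Btwn
    have c1 := com r p
    have c2 := com p v
    have c3 := com v r
    have c4 := com p r
    omega
  have hbtwqvr : Btwn T q r v := by
    unfold Btwn
    have c1 := com r q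
    have c2 := com q v
    have c3 := com v r
    have c4 := com p r
    omega
  have htriv : Btwn T (a • v) r (a • v) := by
    unfold Btwn
    rw [SimpleGraph.dist_self]
    omega
  have hdavp : T.dist p (a • v) = T.dist p r + T.dist r v := by
    have := legs p (a • v) hbtwpvr htriv
    omega
  have main : ∀ y ∈ B, T.dist (a • v) y = T.dist (a • v) p + T.dist p q + T.dist q y := by
    intro y hyB
    have hbry := hBR r hrA y hyB
    have hq_ry : Btwn T q r y := by
      unfold Btwn
      omega
    obtain ⟨c, hc1, hc2, hc3⟩ := exists_median ht r (a • v) y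
    have hlegqc := legs q c hbtwqvr hc1
    have hceqr : c = r := by
      rcases le_total (T.dist r c) (T.dist r q) with hle | hle
      · have hcrq : Btwn T c r q := btw_ord ht hc3 hq_ry hle
        have hcr : T.dist r c = 0 := by
          unfold Btwn at hcrq
          have c1 := com q c
          have c2 := com q r
          have c3 := com c q
          omega
        exact (hconn.dist_eq_zero_iff.mp hcr).symm
      · have hqrc : Btwn T q r c := btw_ord ht hq_ry hc3 hle
        have hrq0 : T.dist r q = 0 := by
          unfold Btwn at hqrc
          have c1 := com q c
          have c2 := com q r
          omega
        have : r = q := hconn.dist_eq_zero_iff.mp hrq0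
        exact absurd (this ▸ hrA) (fun hh => hAB q hh hqB)
    subst hceqr
    unfold Btwn at hc2
    have c1 := com c (a • v)
    have c2 := com p (a • v)
    have c3 := com v c
    have c4 := com p c
    omega
  refine ⟨main, ?_⟩
  have c2 := com p (a • v)
  have c3 := com v r
  omega

end TreeAux3

open TreeAux3 in
/-- elliptic-elliptic case: two elliptic elements with disjoint stable
fixed-point sets generate the free product of the cyclic groups they generate. -/
theorem free_product_of_disjoint_stable_fixed_sets
    {G V : Type*} [Group G] [MulAction G V] (T : SimpleGraph V) (htree : T.IsTree)
    (haut : ActsByGraphAutomorphisms G T)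
    (g h : G)
    (hg : ∃ v : V, g • v = v) (hh : ∃ v : V, h • v = v)
    (hdisj : {v : V | ∃ n : ℤ, n ≠ 0 ∧ g ^ n • v = v} ∩
        {v : V | ∃ n : ℤ, n ≠ 0 ∧ h ^ n • v = v} = ∅) :
    Function.Injective
      (Monoid.CoprodI.lift
        (fun i : Fin 2 => (![Subgroup.zpowers g, Subgroup.zpowers h] i).subtype) :
        Monoid.CoprodI (fun i : Fin 2 => ↥(![Subgroup.zpowers g, Subgroup.zpowers h] i)) →* G) := by
  classical
  obtain ⟨p₀, hp₀⟩ := hg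
  obtain ⟨q₀, hq₀⟩ := hh
  set A := {v : V | ∃ n : ℤ, n ≠ 0 ∧ g ^ n • v = v} with hAdef
  set B := {v : V | ∃ n : ℤ, n ≠ 0 ∧ h ^ n • v = v} with hBdef
  have hAB : ∀ x : V, x ∈ A → x ∈ B → False := by
    intro x h1 h2
    have hx : x ∈ A ∩ B := ⟨h1, h2⟩
    rw [hdisj] at hx
    exact hx
  have com : ∀ x y : V, T.dist x y = T.dist y x := fun x y => SimpleGraph.dist_comm
  have hconn := htree.isConnected
  have haut' : ∀ (s : G) (u v : V), T.Adj (s • u) (s • v) ↔ T.Adj u v := haut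
  have dS : ∀ (t : G) (x y : V), T.dist (t • x) (t • y) = T.dist x y :=
    dist_smul_eq htree haut'
  have zfix : ∀ (s : G) (x : V), s • x = x → ∀ n : ℤ, s ^ n • x = x := by
    intro s x hs n
    have hs' : s ∈ MulAction.stabilizer G x := hs
    exact Subgroup.zpow_mem _ hs' n
  have conv : ∀ (s : G) (u v c : V), s • u = u → s • v = v → Btwn T c u v → s • c = c := by
    intro s u v c hu hv hbtw
    have h1 : Btwn T (s • c) u v := by
      unfold Btwn at *
      calc T.dist u (s • c) + T.dist (s • c) v
          = T.dist (s • u) (s • c) + T.dist (s • c) (s • v) := by rw [hu, hv]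
        _ = T.dist u c + T.dist c v := by rw [dS, dS]
        _ = T.dist u v := hbtw
    have h2 : T.dist u (s • c) = T.dist u c := by
      conv_lhs => rw [← hu]
      exact dS s u c
    exact btw_unique htree h1 hbtw h2
  have convA : ∀ u ∈ A, ∀ w ∈ A, ∀ c : V, Btwn T c u w → c ∈ A := by
    rintro u ⟨n0, hn0, hu⟩ w ⟨n1, hn1, hw⟩ c hbtw
    refine ⟨n0 * n1, mul_ne_zero hn0 hn1, ?_⟩
    have hu' : g ^ (n0 * n1) • u = u := by rw [zpow_mul]; exact zfix _ u hu n1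
    have hw' : g ^ (n0 * n1) • w = w := by rw [mul_comm, zpow_mul]; exact zfix _ w hw n0
    exact conv _ u w c hu' hw' hbtw
  have convB : ∀ u ∈ B, ∀ w ∈ B, ∀ c : V, Btwn T c u w → c ∈ B := by
    rintro u ⟨n0, hn0, hu⟩ w ⟨n1, hn1, hw⟩ c hbtw
    refine ⟨n0 * n1, mul_ne_zero hn0 hn1, ?_⟩
    have hu' : h ^ (n0 * n1) • u = u := by rw [zpow_mul]; exact zfix _ u hu n1
    have hw' : h ^ (n0 * n1) • w = w := by rw [mul_comm, zpow_mul]; exact zfix _ w hw n0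
    exact conv _ u w c hu' hw' hbtw
  have hp₀A : p₀ ∈ A := ⟨1, one_ne_zero, by rw [zpow_one]; exact hp₀⟩
  have hq₀B : q₀ ∈ B := ⟨1, one_ne_zero, by rw [zpow_one]; exact hq₀⟩
  -- minimal bridge
  have hDne : {n : ℕ | ∃ x ∈ A, ∃ y ∈ B, T.dist x y = n}.Nonempty :=
    ⟨T.dist p₀ q₀, p₀, hp₀A, q₀, hq₀B, rfl⟩
  obtain ⟨p, hpA, q, hqB, hpq⟩ := Nat.sInf_mem hDne
  have hmin : ∀ x ∈ A, ∀ y ∈ B, T.dist p q ≤ T.dist x y := by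
    intro x hx y hy
    rw [hpq]
    exact Nat.sInf_le ⟨x, hx, y, hy, rfl⟩
  have hm0 : T.dist p q ≠ 0 := by
    intro h0
    have hq' : p ∈ B := by rw [hconn.dist_eq_zero_iff.mp h0]; exact hqB
    exact hAB p hpA hq'
  -- bridge lemmas
  have hBR1 : ∀ x ∈ A, Btwn T p x q := by
    intro x hx
    obtain ⟨c, hc1, hc2, hc3⟩ := exists_median htree x p q
    have hcA : c ∈ A := convA x hx p hpA c hc1
    have hle := hmin c hcA q hqB
    have hpc : T.dist p c = 0 := by
      unfold Btwn at hc2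
      have c1 := com c q
      omega
    have : p = c := hconn.dist_eq_zero_iff.mp hpc
    rw [this]
    exact hc3
  have hBR2 : ∀ y ∈ B, Btwn T q p y := by
    intro y hy
    obtain ⟨c, hc1, hc2, hc3⟩ := exists_median htree y q p
    have hcB : c ∈ B := convB y hy q hqB c hc1
    have hle := hmin p hpA c hcB
    have hqc : T.dist q c = 0 := by
      unfold Btwn at hc2
      have c1 := com q p
      have c2 := com c p
      have c3 := com p c
      omega
    have hqc' : q = c := hconn.dist_eq_zero_iff.mp hqc
    unfold Btwn at hc3 ⊢
    rw [← hqc'] at hc3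
    have c1 := com y q
    have c2 := com y p
    have c3 := com p y
    have c4 := com q y
    have c5 := com q p
    omega
  have hBR : ∀ x ∈ A, ∀ y ∈ B, T.dist x y = T.dist x p + T.dist p q + T.dist q y := by
    intro x hx y hy
    obtain ⟨c, hc1, hc2, hc3⟩ := exists_median htree x y q
    have hcB : c ∈ B := convB y hy q hqB c (by
      unfold Btwn at hc2 ⊢
      have c1 := com y c
      have c2 := com c y
      omega)
    have hpxq : Btwn T p x q := hBR1 x hx
    rcases le_total (T.dist x c) (T.dist x p) with hle | hle
    · have hcxp : Btwn T c x p := btw_ord htree hc3 hpxq hle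
      exact absurd (convA x hx p hpA c hcxp) (fun hc => hAB c hc hcB)
    · have hpxc : Btwn T p x c := btw_ord htree hpxq hc3 hle
      have hcq : T.dist c q = 0 := by
        have hlcq := hmin p hpA c hcB
        unfold Btwn at hpxc hc3 hpxq
        have c1 := com p c
        omega
      have hceq : c = q := hconn.dist_eq_zero_iff.mp hcq
      rw [hceq] at hc1
      unfold Btwn at hc1 hpxq
      have c1 := com q y
      omega
  -- the two ping-pong steps
  have stepG : ∀ a : G, a ∈ Subgroup.zpowers g → a ≠ 1 → ∀ v : V,
      (∀ x ∈ A, T.dist v x = T.dist v q + T.dist p q + T.dist p x) →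
      ((∀ y ∈ B, T.dist (a • v) y = T.dist (a • v) p + T.dist p q + T.dist q y) ∧
        T.dist p q ≤ T.dist (a • v) p) := by
    intro a ha hane1 v hSB
    obtain ⟨n, hn⟩ := Subgroup.mem_zpowers_iff.mp ha
    have hn0 : n ≠ 0 := by
      rintro rfl
      rw [zpow_zero] at hn
      exact hane1 hn.symm
    have hafix : ∀ x : V, a • x = x → x ∈ A := by
      intro x hx
      refine ⟨n, hn0, ?_⟩
      rw [hn]
      exact hx
    have hane : ∃ x : V, a • x = x := ⟨p₀, by rw [← hn]; exact zfix g p₀ hp₀ n⟩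
    exact key_step htree haut' hpA hqB hAB hBR a hafix hane v hSB
  have stepH : ∀ b : G, b ∈ Subgroup.zpowers h → b ≠ 1 → ∀ v : V,
      (∀ y ∈ B, T.dist v y = T.dist v p + T.dist p q + T.dist q y) →
      ((∀ x ∈ A, T.dist (b • v) x = T.dist (b • v) q + T.dist p q + T.dist p x) ∧
        T.dist p q ≤ T.dist (b • v) q) := by
    intro b hb hbne1 v hSA
    obtain ⟨n, hn⟩ := Subgroup.mem_zpowers_iff.mp hb
    have hn0 : n ≠ 0 := by
      rintro rfl
      rw [zpow_zero] at hn
      exact hbne1 hn.symm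
    have hbfix : ∀ x : V, b • x = x → x ∈ B := by
      intro x hx
      refine ⟨n, hn0, ?_⟩
      rw [hn]
      exact hx
    have hbne : ∃ x : V, b • x = x := ⟨q₀, by rw [← hn]; exact zfix h q₀ hq₀ n⟩
    have hAB' : ∀ x : V, x ∈ B → x ∈ A → False := fun x h1 h2 => hAB x h2 h1
    have hBR' : ∀ y ∈ B, ∀ x ∈ A, T.dist y x = T.dist y q + T.dist q p + T.dist p x := by
      intro y hy x hx
      have := hBR x hx y hy
      have c1 := com x y
      have c2 := com x p
      have c3 := com q y
      have c4 := com q p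
      omega
    have hSA' : ∀ y ∈ B, T.dist v y = T.dist v p + T.dist q p + T.dist q y := by
      intro y hy
      have := hSA y hy
      have c4 := com q p
      omega
    have := key_step htree haut' hqB hpA hAB' hBR' b hbfix hbne v hSA'
    have c4 := com q p
    constructor
    · intro x hx
      have := this.1 x hx
      omega
    · omega
  -- base points
  have hSBq : ∀ x ∈ A, T.dist q x = T.dist q q + T.dist p q + T.dist p x := by
    intro x hx
    have := hBR1 x hx
    unfold Btwn at this
    rw [SimpleGraph.dist_self]
    have c1 := com q x
    have c2 := com x p
    omega
  have hSAp : ∀ y ∈ B, T.dist p y = T.dist p p + T.dist p q + T.dist q y := by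
    intro y hy
    have := hBR2 y hy
    unfold Btwn at this
    rw [SimpleGraph.dist_self]
    omega
  have fin2 : ∀ i : Fin 2, i = 0 ∨ i = 1 := by decide
  -- the word induction
  have hrec : ∀ (L : List (Σ i : Fin 2, ↥(![Subgroup.zpowers g, Subgroup.zpowers h] i))),
      (∀ l ∈ L, (l.2 : G) ≠ 1) → L.Chain' (fun l l' => l.1 ≠ l'.1) →
      ∀ (hne : L ≠ []) (v : V),
        ((L.getLast hne).1 = 0 → ∀ x ∈ A, T.dist v x = T.dist v q + T.dist p q + T.dist p x) →
        ((L.getLast hne).1 = 1 → ∀ y ∈ B, T.dist v y = T.dist v p + T.dist p q + T.dist q y) →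
        (((L.head hne).1 = 0 →
            (∀ y ∈ B, T.dist ((L.map fun l => ((l.2 : G))).prod • v) y =
              T.dist ((L.map fun l => ((l.2 : G))).prod • v) p + T.dist p q + T.dist q y) ∧
            T.dist p q ≤ T.dist ((L.map fun l => ((l.2 : G))).prod • v) p) ∧
         ((L.head hne).1 = 1 →
            (∀ x ∈ A, T.dist ((L.map fun l => ((l.2 : G))).prod • v) x =
              T.dist ((L.map fun l => ((l.2 : G))).prod • v) q + T.dist p q + T.dist p x) ∧
            T.dist p q ≤ T.dist ((L.map fun l => ((l.2 : G))).prod • v) q)) := by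
    intro L
    induction L with
    | nil => intro _ _ hne; exact absurd rfl hne
    | cons cL L ih =>
      intro hne1 hch hne v hlast0 hlast1
      have hval : ((cL :: L).map fun l => ((l.2 : G))).prod = (cL.2 : G) * (L.map fun l => ((l.2 : G))).prod := by
        rw [List.map_cons, List.prod_cons]
      have hcne1 : (cL.2 : G) ≠ 1 := hne1 cL List.mem_cons_self
      have hmem2 := cL.2.2
      rcases List.eq_nil_or_concat' L with rfl | hLne
      · -- singleton
        have hlast0' : cL.1 = 0 → ∀ x ∈ A, T.dist v x = T.dist v q + T.dist p q + T.dist p x :=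
          fun h0 => hlast0 h0
        have hlast1' : cL.1 = 1 → ∀ y ∈ B, T.dist v y = T.dist v p + T.dist p q + T.dist q y :=
          fun h1 => hlast1 h1
        simp only [List.map_cons, List.map_nil, List.prod_cons, List.prod_nil, mul_one]
        rcases fin2 cL.1 with hc0 | hc1
        · refine ⟨fun _ => ?_, fun hc1' => absurd (hc0.symm.trans hc1') (by decide)⟩
          have hmem : (cL.2 : G) ∈ Subgroup.zpowers g := by
            have hsub : (![Subgroup.zpowers g, Subgroup.zpowers h] cL.1) ≤ Subgroup.zpowers g := by
              rw [hc0]; exact le_of_eq (by simp)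
            exact hsub cL.2.2
          exact stepG _ hmem hcne1 v (hlast0' hc0)
        · refine ⟨fun hc0' => absurd (hc1.symm.trans hc0') (by decide), fun _ => ?_⟩
          have hmem : (cL.2 : G) ∈ Subgroup.zpowers h := by
            have hsub : (![Subgroup.zpowers g, Subgroup.zpowers h] cL.1) ≤ Subgroup.zpowers h := by
              rw [hc1]; exact le_of_eq (by simp)
            exact hsub cL.2.2
          exact stepH _ hmem hcne1 v (hlast1' hc1)
      · -- cons with nonempty tail
        obtain ⟨L0, c', rfl⟩ := hLne
        have hLne' : L0 ++ [c'] ≠ [] := by simp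
        have hlast : ((cL :: (L0 ++ [c'])).getLast hne) = (L0 ++ [c']).getLast hLne' :=
          List.getLast_cons hLne'
        have hchain : cL.1 ≠ ((L0 ++ [c']).head hLne').1 := by
          obtain ⟨d, L1, hdl⟩ := List.exists_cons_of_ne_nil hLne'
          have hheadd : (L0 ++ [c']).head hLne' = d := by
            have h1 : (L0 ++ [c']).head? = some d := by rw [hdl]; rfl
            have h2 := List.head?_eq_head hLne'
            rw [h1] at h2
            exact (Option.some.inj h2).symm
          have hch' := hch
          rw [hdl] at hch'
          rw [hheadd]
          exact (List.isChain_cons_cons.mp hch').1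
        have ihres := ih (fun l hl => hne1 l (List.mem_cons_of_mem _ hl))
          (List.IsChain.tail hch) hLne' v
          (fun h0 => hlast0 ((congrArg Sigma.fst hlast).trans h0))
          (fun h1 => hlast1 ((congrArg Sigma.fst hlast).trans h1))
        set u := ((L0 ++ [c']).map fun l => ((l.2 : G))).prod • v with hu
        have hact : ((cL :: (L0 ++ [c'])).map fun l => ((l.2 : G))).prod • v = (cL.2 : G) • u := by
          rw [hval, mul_smul]
        rw [hact]
        rcases fin2 cL.1 with hc0 | hc1
        · refine ⟨fun _ => ?_, fun hc1' => absurd (hc0.symm.trans hc1') (by decide)⟩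
          have hmem : (cL.2 : G) ∈ Subgroup.zpowers g := by
            have hsub : (![Subgroup.zpowers g, Subgroup.zpowers h] cL.1) ≤ Subgroup.zpowers g := by
              rw [hc0]; exact le_of_eq (by simp)
            exact hsub cL.2.2
          have hhd1 : ((L0 ++ [c']).head hLne').1 = 1 := by
            rcases fin2 ((L0 ++ [c']).head hLne').1 with hh0 | hh1
            · exact absurd (hc0.trans hh0.symm) hchain
            · exact hh1
          exact stepG _ hmem hcne1 u (ihres.2 hhd1).1
        · refine ⟨fun hc0' => absurd (hc1.symm.trans hc0') (by decide), fun _ => ?_⟩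
          have hmem : (cL.2 : G) ∈ Subgroup.zpowers h := by
            have hsub : (![Subgroup.zpowers g, Subgroup.zpowers h] cL.1) ≤ Subgroup.zpowers h := by
              rw [hc1]; exact le_of_eq (by simp)
            exact hsub cL.2.2
          have hhd0 : ((L0 ++ [c']).head hLne').1 = 0 := by
            rcases fin2 ((L0 ++ [c']).head hLne').1 with hh0 | hh1
            · exact hh0
            · exact absurd (hc1.trans hh1.symm) hchain
          exact stepH _ hmem hcne1 u (ihres.1 hhd0).1
  -- conclude injectivity
  rw [injective_iff_map_eq_one]
  intro x hx
  by_contra hx1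
  set w := Monoid.CoprodI.Word.equiv x with hw
  have hxprod : w.prod = x := Monoid.CoprodI.Word.equiv.symm_apply_apply x
  rcases List.eq_nil_or_concat' w.toList with hLnil | hLne
  · have : w.prod = 1 := by
      rw [Monoid.CoprodI.Word.prod, hLnil, List.map_nil, List.prod_nil]
    rw [this] at hxprod
    exact hx1 hxprod.symm
  · obtain ⟨L0, c', hLeq⟩ := hLne
    have hne : w.toList ≠ [] := by rw [hLeq]; simp
    have hne1 : ∀ l ∈ w.toList, (l.2 : G) ≠ 1 := by
      intro l hl hcoe
      exact w.ne_one l hl (by exact_mod_cast hcoe)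
    have hch := w.chain_ne
    -- the product of the letters in G is 1
    have hlift : ((w.toList.map fun l => ((l.2 : G))).prod : G) = 1 := by
      have h1 : Monoid.CoprodI.lift
          (fun i : Fin 2 => (![Subgroup.zpowers g, Subgroup.zpowers h] i).subtype) w.prod = 1 := by
        rw [hxprod]; exact hx
      rw [Monoid.CoprodI.Word.prod, map_list_prod, List.map_map] at h1
      rw [← h1]
      exact congrArg List.prod (List.map_congr_left (fun l hl => by
        simp [Monoid.CoprodI.lift_of]))
    rcases fin2 ((w.toList.getLast hne).1) with hl0 | hl1
    · have hres := hrec w.toList hne1 hch hne q (fun _ => hSBq)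
        (fun h1 => absurd (hl0.symm.trans h1) (by decide))
      rw [hlift, one_smul] at hres
      rcases fin2 ((w.toList.head hne).1) with hh0 | hh1
      · obtain ⟨hSA, hge⟩ := hres.1 hh0
        have hq' := hSA q hqB
        rw [SimpleGraph.dist_self] at hq'
        omega
      · obtain ⟨hSB2, hge⟩ := hres.2 hh1
        rw [SimpleGraph.dist_self] at hge
        omega
    · have hres := hrec w.toList hne1 hch hne p
        (fun h0 => absurd (hl1.symm.trans h0) (by decide)) (fun _ => hSAp)
      rw [hlift, one_smul] at hres
      rcases fin2 ((w.toList.head hne).1) with hh0 | hh1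
      · obtain ⟨hSA, hge⟩ := hres.1 hh0
        rw [SimpleGraph.dist_self] at hge
        omega
      · obtain ⟨hSB2, hge⟩ := hres.2 hh1
        have hp' := hSB2 p hpA
        rw [SimpleGraph.dist_self] at hp'
        omega
end

section
/- Let V be a type, T : SimpleGraph V a tree, and let a group G act on V so that each g ∈ G is an automorphism of T, without inversions (for no g ∈ G and adjacent u, v does g·u = v and g·v = u). For each vertex v, let K_v be the kernel of the action of Stab_G(v) on the neighbour set of v, and ρ_v : Stab_G(v) → Stab_G(v)/K_v the quotient map. Suppose that for every vertex v: (a) the group Stab_G(v)/K_v is torsion-free, and (b) the family {ρ_v(Stab_G(v) ∩ Stab_G(w)) : w a neighbour of v} is a malnormal collection in Stab_G(v)/K_v, meaning that for all neighbours w, w' of v and all x ∈ Stab_G(v)/K_v, if x·ρ_v(Stab_G(v) ∩ Stab_G(w))·x⁻¹ ∩ ρ_v(Stab_G(v) ∩ Stab_G(w')) is nontrivial, then w = w' and x ∈ ρ_v(Stab_G(v) ∩ Stab_G(w)). Then every vertex stabiliser is closed under roots: for all g ∈ G, w ∈ V and n > 0, if gⁿ·w = w then g·w = w. -/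
/-- The pointwise stabiliser of the edge `{v, w}`. -/
def edgeStabilizer (G : Type*) {V : Type*} [Group G] [MulAction G V] (v w : V) :
    Subgroup G :=
  MulAction.stabilizer G v ⊓ MulAction.stabilizer G w

/-- The kernel of the action of the stabiliser of `v` on the neighbours of `v`,
viewed as a subgroup of `G`. -/
def neighbourKernel (G : Type*) {V : Type*} [Group G] [MulAction G V] (T : SimpleGraph V)
    (v : V) : Subgroup G :=
  MulAction.stabilizer G v ⊓ ⨅ w ∈ T.neighborSet v, MulAction.stabilizer G w


section AuxLemmas

open SimpleGraph

variable {V : Type*} {T : SimpleGraph V}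

private lemma aux_getVert_map {V' : Type*} {T' : SimpleGraph V'} (f : T →g T') :
    ∀ {u v : V} (p : T.Walk u v) (i : ℕ), (p.map f).getVert i = f (p.getVert i)
  | _, _, .nil, i => by
      simp [Walk.getVert_of_length_le]
  | _, _, .cons h p, 0 => rfl
  | _, _, .cons h p, (i + 1) => by
      simpa [Walk.map_cons, Walk.getVert_cons_succ] using aux_getVert_map f p i

/-- In a tree, appending two paths that do not backtrack at the junction gives a path. -/
private lemma aux_append_isPath [DecidableEq V] (htree : T.IsTree) {a b c : V}
    {p : T.Walk a b} {q : T.Walk b c} (hp : p.IsPath) (hq : q.IsPath)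
    (hp1 : 0 < p.length) (hq1 : 0 < q.length)
    (hne : p.getVert (p.length - 1) ≠ q.getVert 1) :
    (p.append q).IsPath := by
  rw [Walk.isPath_def, Walk.support_append]
  have hqnodup := hq.support_nodup
  rw [q.support_eq_cons, List.nodup_cons] at hqnodup
  refine List.Nodup.append hp.support_nodup hqnodup.2 ?_
  intro z hzp hzt
  have hzq : z ∈ q.support := List.tail_subset _ hzt
  have hzb : z ≠ b := by rintro rfl; exact hqnodup.1 hzt
  exfalso
  have hr : (p.dropUntil z hzp).IsPath := hp.dropUntil hzp
  have ht : (q.takeUntil z hzq).IsPath := hq.takeUntil hzq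
  have hrlen : 0 < (p.dropUntil z hzp).length := by
    rcases Nat.eq_zero_or_pos (p.dropUntil z hzp).length with h0 | h
    · exact absurd (Walk.eq_of_length_eq_zero h0) hzb
    · exact h
  have htlen : 0 < (q.takeUntil z hzq).length := by
    rcases Nat.eq_zero_or_pos (q.takeUntil z hzq).length with h0 | h
    · exact absurd (Walk.eq_of_length_eq_zero h0).symm hzb
    · exact h
  have hrt : p.dropUntil z hzp = (q.takeUntil z hzq).reverse :=
    (htree.existsUnique_path z b).unique hr ht.reverse
  have e : (p.takeUntil z hzp).append (p.dropUntil z hzp) = p := p.take_spec hzp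
  have e' : (q.takeUntil z hzq).append (q.dropUntil z hzq) = q := q.take_spec hzq
  have h1 : p.getVert (p.length - 1) = (p.dropUntil z hzp).getVert
      ((p.dropUntil z hzp).length - 1) := by
    conv_lhs => rw [← e]
    rw [Walk.length_append, Walk.getVert_append, if_neg (by omega)]
    congr 1
    omega
  have h2 : q.getVert 1 = (q.takeUntil z hzq).getVert 1 := by
    conv_lhs => rw [← e']
    rw [Walk.getVert_append]
    by_cases h1t : 1 < (q.takeUntil z hzq).length
    · rw [if_pos h1t]
    · have hteq : (q.takeUntil z hzq).length = 1 := by omega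
      rw [if_neg (by omega), hteq]
      rw [show (1 : ℕ) - 1 = 0 from rfl, Walk.getVert_zero, ← hteq, Walk.getVert_length]
  have h3 : (p.dropUntil z hzp).getVert ((p.dropUntil z hzp).length - 1)
      = (q.takeUntil z hzq).getVert 1 := by
    rw [hrt, Walk.getVert_reverse, Walk.length_reverse]
    congr 1
    omega
  exact hne (by rw [h1, h3, h2])

private lemma aux_closed_path {w : V} {p : T.Walk w w} (hp : p.IsPath) : p.length = 0 := by
  cases p with
  | nil => rfl
  | cons h q =>
    rw [Walk.cons_isPath_iff] at hp
    exact absurd q.end_mem_support hp.2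

end AuxLemmas

/-- The graph homomorphism given by acting by `h`. -/
private def auxHom {G V : Type*} [Group G] [MulAction G V] {T : SimpleGraph V}
    (haut : ActsByGraphAutomorphisms G T) (h : G) : T →g T :=
  ⟨fun x => h • x, fun hadj => (haut h _ _).2 hadj⟩

@[simp] private lemma auxHom_apply {G V : Type*} [Group G] [MulAction G V] {T : SimpleGraph V}
    (haut : ActsByGraphAutomorphisms G T) (h : G) (x : V) : auxHom haut h x = h • x := rfl


/-- vertex stabilisers are closed under roots when the local quotients are
torsion-free and the local edge groups form malnormal collections. Membership in a coset
of `neighbourKernel G T v` expresses equality of images under the quotient map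
`ρ_v : Stab_G(v) → Stab_G(v)/K_v`. -/
theorem stabilizers_closed_under_roots_of_malnormal
    {G V : Type*} [Group G] [MulAction G V] (T : SimpleGraph V) (htree : T.IsTree)
    (haut : ActsByGraphAutomorphisms G T)
    (hnoinv : ∀ (g : G) (u v : V), T.Adj u v → ¬(g • u = v ∧ g • v = u))
    (htorsionfree : ∀ v : V, ∀ g ∈ MulAction.stabilizer G v, ∀ n : ℕ, 0 < n →
      g ^ n ∈ neighbourKernel G T v → g ∈ neighbourKernel G T v)
    (hmalnormal : ∀ v w w' : V, T.Adj v w → T.Adj v w' →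
      ∀ x ∈ MulAction.stabilizer G v,
        (∃ a ∈ edgeStabilizer G v w, x * a * x⁻¹ ∉ neighbourKernel G T v ∧
          ∃ b ∈ edgeStabilizer G v w', (x * a * x⁻¹) * b⁻¹ ∈ neighbourKernel G T v) →
        w = w' ∧ ∃ c ∈ edgeStabilizer G v w, x * c⁻¹ ∈ neighbourKernel G T v) :
    ∀ (g : G) (w : V) (n : ℕ), 0 < n → g ^ n • w = w → g • w = w := by
  classical
  intro g w n hn hgw
  suffices H : ∀ d : ℕ, ∀ (g : G) (w : V), g ^ n • w = w →
      ∀ p : T.Walk w (g • w), p.IsPath → p.length = d → g • w = w by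
    obtain ⟨q⟩ := htree.isConnected w (g • w)
    exact H q.bypass.length g w hgw q.bypass q.bypass_isPath rfl
  intro d
  induction d using Nat.strong_induction_on with
  | _ d IH =>
  intro g w hgn p hp hlen
  subst hlen
  by_cases h0 : p.length = 0
  · have h := p.getVert_length
    rw [h0, SimpleGraph.Walk.getVert_zero] at h
    exact h.symm
  have hd : 0 < p.length := Nat.pos_of_ne_zero h0
  have hinj : ∀ h : G, Function.Injective (auxHom haut h) := fun h => MulAction.injective h
  -- `g ^ n` fixes `g • w` as well
  have hgn' : g ^ n • (g • w) = g • w := by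
    rw [← mul_smul, ← pow_succ, pow_succ', mul_smul, hgn]
  -- `g ^ n` fixes the path `p` pointwise
  have hfix : ∀ i : ℕ, g ^ n • p.getVert i = p.getVert i := by
    have hq : ((p.map (auxHom haut (g ^ n))).copy hgn hgn').IsPath :=
      (SimpleGraph.Walk.isPath_copy _ _ _).2
        (SimpleGraph.Walk.map_isPath_of_injective (hinj (g ^ n)) hp)
    have hqp : (p.map (auxHom haut (g ^ n))).copy hgn hgn' = p :=
      (htree.existsUnique_path w (g • w)).unique hq hp
    intro i
    have h := congrArg (fun r : T.Walk w (g • w) => r.getVert i) hqp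
    replace h := (SimpleGraph.Walk.getVert_copy (p.map (auxHom haut (g ^ n))) i hgn hgn').symm.trans h
    rw [aux_getVert_map] at h
    exact h
  by_cases hcase : p.getVert (p.length - 1) = g • p.getVert 1
  · -- Case B : backtracking at the junction
    by_cases hd1 : p.length = 1
    · -- inversion, contradiction
      exfalso
      have hadj : T.Adj w (g • w) := by
        have h := p.adj_getVert_succ (i := 0) (by omega)
        rw [SimpleGraph.Walk.getVert_zero, show (0 : ℕ) + 1 = p.length by omega,
          SimpleGraph.Walk.getVert_length] at h
        exact h
      have hx1 : p.getVert 1 = g • w := by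
        rw [show (1 : ℕ) = p.length by omega, SimpleGraph.Walk.getVert_length]
      have hy : p.getVert (p.length - 1) = w := by
        rw [show p.length - 1 = 0 by omega, SimpleGraph.Walk.getVert_zero]
      rw [hy, hx1] at hcase
      exact hnoinv g w (g • w) hadj ⟨rfl, hcase.symm⟩
    · -- length ≥ 2 : recurse to the second vertex of the path
      have hd2 : 2 ≤ p.length := by omega
      have hnp : ¬ p.Nil := by rw [SimpleGraph.Walk.nil_iff_length_eq]; omega
      have hp1 : p.tail.IsPath := hp.tail
      have hp1len : p.tail.length = p.length - 1 := by
        have := SimpleGraph.Walk.length_tail_add_one hnp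
        omega
      have hnp1 : ¬ p.tail.reverse.Nil := by
        rw [SimpleGraph.Walk.nil_iff_length_eq, SimpleGraph.Walk.length_reverse]
        omega
      have hend : p.tail.reverse.getVert 1 = g • p.getVert 1 := by
        rw [SimpleGraph.Walk.getVert_reverse, SimpleGraph.Walk.getVert_tail _, ← hcase]
        congr 1
        omega
      have hp2 : (p.tail.reverse.tail.reverse.copy rfl hend).IsPath :=
        (SimpleGraph.Walk.isPath_copy _ _ _).2 ((hp1.reverse.tail).reverse)
      have hp2len : (p.tail.reverse.tail.reverse.copy rfl hend).length = p.length - 2 := by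
        have h1 := SimpleGraph.Walk.length_tail_add_one hnp1
        rw [SimpleGraph.Walk.length_copy, SimpleGraph.Walk.length_reverse]
        rw [SimpleGraph.Walk.length_reverse] at h1
        omega
      have hx1fix : g • p.getVert 1 = p.getVert 1 := by
        refine IH (p.length - 2) (by omega) g (p.getVert 1) (hfix 1)
          (p.tail.reverse.tail.reverse.copy rfl hend) hp2 hp2len
      -- endgame at the vertex `v := p.getVert 1`
      have hvstab : g ∈ MulAction.stabilizer G (p.getVert 1) :=
        MulAction.mem_stabilizer_iff.mpr hx1fix
      have hadj_wv : T.Adj (p.getVert 1) w := by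
        have h := p.adj_getVert_succ (i := 0) (by omega)
        rw [SimpleGraph.Walk.getVert_zero] at h
        exact h.symm
      have hadj_gw : T.Adj (p.getVert 1) (g • w) := by
        have h := (haut g (p.getVert 1) w).2 hadj_wv
        rwa [hx1fix] at h
      have hgn_edge1 : g ^ n ∈ edgeStabilizer G (p.getVert 1) w :=
        Subgroup.mem_inf.mpr ⟨MulAction.mem_stabilizer_iff.mpr (hfix 1),
          MulAction.mem_stabilizer_iff.mpr hgn⟩
      have hgn_edge2 : g ^ n ∈ edgeStabilizer G (p.getVert 1) (g • w) :=
        Subgroup.mem_inf.mpr ⟨MulAction.mem_stabilizer_iff.mpr (hfix 1),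
          MulAction.mem_stabilizer_iff.mpr hgn'⟩
      by_cases hK : g ^ n ∈ neighbourKernel G T (p.getVert 1)
      · have hgK : g ∈ neighbourKernel G T (p.getVert 1) :=
          htorsionfree (p.getVert 1) g hvstab n hn hK
        have h2 := (Subgroup.mem_inf.mp hgK).2
        simp only [Subgroup.mem_iInf] at h2
        exact MulAction.mem_stabilizer_iff.mp (h2 w hadj_wv)
      · have hmal := hmalnormal (p.getVert 1) w (g • w) hadj_wv hadj_gw 1 (one_mem _)
          ⟨g ^ n, hgn_edge1, by simpa using hK, g ^ n, hgn_edge2, by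
            simpa using (one_mem (neighbourKernel G T (p.getVert 1)))⟩
        exact hmal.1.symm
  · -- Case A : no backtracking, the translates of `p` concatenate to a closed path
    exfalso
    have claim : ∀ k : ℕ, ∃ q : T.Walk w (g ^ (k + 1) • w), q.IsPath ∧
        q.length = (k + 1) * p.length ∧
        q.getVert (q.length - 1) = g ^ k • p.getVert (p.length - 1) := by
      intro k
      induction k with
      | zero =>
        refine ⟨p.copy rfl (by rw [pow_one]), ?_, ?_, ?_⟩
        · exact (SimpleGraph.Walk.isPath_copy _ _ _).2 hp
        · simp [SimpleGraph.Walk.length_copy]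
        · simp [SimpleGraph.Walk.getVert_copy, SimpleGraph.Walk.length_copy]
      | succ k ih =>
        obtain ⟨q, hq, hqlen, hqpen⟩ := ih
        have hsEq : g ^ (k + 1) • (g • w) = g ^ (k + 1 + 1) • w := by
          rw [← mul_smul, ← pow_succ]
        set r : T.Walk (g ^ (k + 1) • w) (g ^ (k + 1 + 1) • w) :=
          (p.map (auxHom haut (g ^ (k + 1)))).copy rfl hsEq with hr_def
        have hr : r.IsPath := (SimpleGraph.Walk.isPath_copy _ _ _).2
          (SimpleGraph.Walk.map_isPath_of_injective (hinj _) hp)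
        have hrlen : r.length = p.length := by
          rw [hr_def]; exact (SimpleGraph.Walk.length_copy _ _ _).trans (SimpleGraph.Walk.length_map _ _)
        have hrget : ∀ i : ℕ, r.getVert i = g ^ (k + 1) • p.getVert i := by
          intro i
          rw [hr_def]; refine (SimpleGraph.Walk.getVert_copy _ _ _ _).trans ?_; rw [aux_getVert_map]
          rfl
        have hq0 : 0 < q.length := by
          rw [hqlen]; positivity
        have hneq : q.getVert (q.length - 1) ≠ r.getVert 1 := by
          rw [hqpen, hrget]
          intro hEq
          apply hcase
          have h' : g ^ k • p.getVert (p.length - 1) = g ^ k • (g • p.getVert 1) := by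
            rw [hEq, ← mul_smul, ← pow_succ]
          exact MulAction.injective (g ^ k) h'
        have happ : (q.append r).IsPath :=
          aux_append_isPath htree hq hr hq0 (by omega) hneq
        refine ⟨q.append r, happ, ?_, ?_⟩
        · rw [SimpleGraph.Walk.length_append, hqlen, hrlen]; ring
        · have hL : (q.append r).length = q.length + r.length :=
            SimpleGraph.Walk.length_append _ _
          rw [hL, SimpleGraph.Walk.getVert_append, if_neg (by omega)]
          rw [show q.length + r.length - 1 - q.length = r.length - 1 by omega]
          rw [hrget, hrlen]
    obtain ⟨q, hq, hqlen, -⟩ := claim (n - 1)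
    have hendEq : g ^ (n - 1 + 1) • w = w := by
      rw [Nat.sub_add_cancel hn]; exact hgn
    have h := aux_closed_path ((SimpleGraph.Walk.isPath_copy _ rfl hendEq).2 hq)
    rw [SimpleGraph.Walk.length_copy, hqlen] at h
    rcases Nat.mul_eq_zero.mp h with h' | h' <;> omega
end

section
/- Let Γ be a finite labelled simple graph with vertex set V and Artin group A_Γ, expressed as a visual splitting: V = V₁ ∪ V₂ with V₁, V₂ proper subsets and V₀ := V₁ ∩ V₂ nonempty, such that A_{V₁} and A_{V₂} satisfy the power alternative and A_Γ has the parabolic intersection property and the normaliser structure property. Let S ⊆ V₁ or S ⊆ V₂, let g₀ ∈ A_Γ and set P = g₀·A_S·g₀⁻¹ (a parabolic subgroup conjugate into a factor). Let z ∈ A_Γ normalise P (z·P·z⁻¹ = P) and let H = ⟨P ∪ {z}⟩ be the subgroup generated by P and z. Then either P has finite index in H, or H contains a finite-index subgroup isomorphic to P × ℤ; in particular, H satisfies the power alternative. -/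
open scoped Classical

/-- The alternating word `stst⋯` of length `k` in the free group on `V`. -/
def artinWord {V : Type*} (s t : V) (k : ℕ) : FreeGroup V :=
  ((List.range k).map (fun i => if i % 2 = 0 then FreeGroup.of s else FreeGroup.of t)).prod

/-- The Artin relations of a labelled graph. -/
def artinRels {V : Type*} (Γ : SimpleGraph V) (m : V → V → ℕ) : Set (FreeGroup V) :=
  {r | ∃ s t : V, Γ.Adj s t ∧ r = artinWord s t (m s t) * (artinWord t s (m s t))⁻¹}

/-- The Artin group of a labelled graph. -/
abbrev ArtinGroup {V : Type*} (Γ : SimpleGraph V) (m : V → V → ℕ) : Type _ :=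
  PresentedGroup (artinRels Γ m)

/-- The standard generator of the Artin group associated to the vertex `v`. -/
def artinGen {V : Type*} (Γ : SimpleGraph V) (m : V → V → ℕ) (v : V) : ArtinGroup Γ m :=
  PresentedGroup.of v

/-- The standard parabolic subgroup of `A_Γ` generated by `S ⊆ V`. -/
def standardParabolic {V : Type*} (Γ : SimpleGraph V) (m : V → V → ℕ) (S : Set V) :
    Subgroup (ArtinGroup Γ m) :=
  Subgroup.closure (artinGen Γ m '' S)

/-- The conjugate `g P g⁻¹` of a subgroup `P`. -/
def conjSubgroup {G : Type*} [Group G] (g : G) (P : Subgroup G) : Subgroup G :=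
  Subgroup.map (MulAut.conj g).toMonoidHom P

/-- Parabolic subgroups: conjugates of standard parabolic subgroups. -/
def IsParabolic {V : Type*} (Γ : SimpleGraph V) (m : V → V → ℕ)
    (P : Subgroup (ArtinGroup Γ m)) : Prop :=
  ∃ (g : ArtinGroup Γ m) (S : Set V), P = conjSubgroup g (standardParabolic Γ m S)

/-- The parabolic intersection property. -/
def ParabolicIntersectionProperty {V : Type*} (Γ : SimpleGraph V) (m : V → V → ℕ) : Prop :=
  ∀ P Q : Subgroup (ArtinGroup Γ m), IsParabolic Γ m P → IsParabolic Γ m Q →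
    IsParabolic Γ m (P ⊓ Q)

/-- The normaliser structure property. -/
def NormaliserStructureProperty {V : Type*} (Γ : SimpleGraph V) (m : V → V → ℕ) : Prop :=
  ∀ S : Set V,
    ((Subgroup.normalizer (standardParabolic Γ m S : Set (ArtinGroup Γ m))) : Set (ArtinGroup Γ m)) =
      {x | ∃ a ∈ standardParabolic Γ m S, ∃ q : ArtinGroup Γ m,
        ((fun y => q * y * q⁻¹) '' (artinGen Γ m '' S) = artinGen Γ m '' S) ∧ x = a * q}

/- ### Auxiliary lemmas -/

section Aux

variable {G G' : Type*} [Group G] [Group G']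

lemma lift_if_comp (f : G →* G') (x y : G) :
    (FreeGroup.lift (fun i : Fin 2 => if i = 0 then f x else f y) : FreeGroup (Fin 2) →* G')
      = f.comp (FreeGroup.lift (fun i : Fin 2 => if i = 0 then x else y)) := by
  apply FreeGroup.ext_hom
  intro i
  simp [apply_ite f]

lemma fg2_map {f : G →* G'} (hf : Function.Injective f)
    {x y : G} (h : FreelyGenerateF2 x y) : FreelyGenerateF2 (f x) (f y) := by
  unfold FreelyGenerateF2 at *
  rw [lift_if_comp]
  exact hf.comp h

lemma fg2_of_comp (f : G →* G')
    {x y : G} (h : FreelyGenerateF2 (f x) (f y)) : FreelyGenerateF2 x y := by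
  unfold FreelyGenerateF2 at *
  rw [lift_if_comp] at h
  exact Function.Injective.of_comp (by simpa [MonoidHom.coe_comp] using h)

lemma pa_of_injective (f : G →* G')
    (hf : Function.Injective f) (h : PowerAlternative G') : PowerAlternative G := by
  intro g k
  obtain ⟨n, hn, hc⟩ := h (f g) (f k)
  refine ⟨n, hn, ?_⟩
  rcases hc with hc | hc
  · left
    have : f (g ^ n * k ^ n) = f (k ^ n * g ^ n) := by
      simpa [map_mul, map_pow] using hc.eq
    exact hf this
  · right
    rw [← map_pow, ← map_pow] at hc
    exact fg2_of_comp f hc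

lemma pa_prod_int {A : Type*} [Group A] (h : PowerAlternative A) :
    PowerAlternative (A × Multiplicative ℤ) := by
  rintro ⟨a, b⟩ ⟨a', b'⟩
  obtain ⟨n, hn, hc⟩ := h a a'
  refine ⟨n, hn, ?_⟩
  rcases hc with hc | hc
  · left
    simp only [Commute, SemiconjBy, Prod.pow_def, Prod.mk_mul_mk, Prod.mk.injEq]
    exact ⟨hc, mul_comm _ _⟩
  · right
    have := fg2_of_comp (MonoidHom.fst A (Multiplicative ℤ)) (x := (a, b) ^ n) (y := (a', b') ^ n) ?_
    · exact this
    · simpa using hc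

lemma exists_pow_mem_of_index_ne_zero {K : Subgroup G} (hK : K.index ≠ 0) (g : G) :
    ∃ d : ℕ, 1 ≤ d ∧ g ^ d ∈ K := by
  have hfin : Finite (G ⧸ K) := (Nat.card_ne_zero.mp hK).2
  obtain ⟨i, j, hij, hfij⟩ := Finite.exists_ne_map_eq_of_infinite
    (fun i : ℕ => (QuotientGroup.mk (g ^ i) : G ⧸ K))
  rcases hij.lt_or_gt with hlt | hlt
  · refine ⟨j - i, by omega, ?_⟩
    have h2 : g ^ i * g ^ (j - i) = g ^ j := by rw [← pow_add]; congr 1; omega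
    have := (QuotientGroup.eq (s := K)).mp hfij
    rwa [← h2, inv_mul_cancel_left] at this
  · refine ⟨i - j, by omega, ?_⟩
    have h2 : g ^ j * g ^ (i - j) = g ^ i := by rw [← pow_add]; congr 1; omega
    have := (QuotientGroup.eq (s := K)).mp hfij.symm
    rwa [← h2, inv_mul_cancel_left] at this

lemma pa_of_finite_index (K : Subgroup G) (hK : K.index ≠ 0)
    (hPA : PowerAlternative K) : PowerAlternative G := by
  intro g h
  obtain ⟨d₁, hd₁, hg⟩ := exists_pow_mem_of_index_ne_zero hK g
  obtain ⟨d₂, hd₂, hh⟩ := exists_pow_mem_of_index_ne_zero hK h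
  have hgm : g ^ (d₁ * d₂) ∈ K := by rw [pow_mul]; exact pow_mem hg d₂
  have hhm : h ^ (d₁ * d₂) ∈ K := by rw [mul_comm, pow_mul]; exact pow_mem hh d₁
  obtain ⟨n, hn, hc⟩ := hPA ⟨g ^ (d₁ * d₂), hgm⟩ ⟨h ^ (d₁ * d₂), hhm⟩
  refine ⟨d₁ * d₂ * n, Nat.one_le_iff_ne_zero.mpr (by simp [Nat.mul_eq_zero]; omega), ?_⟩
  rcases hc with hc | hc
  · left
    have := congrArg (Subtype.val) hc
    simpa [pow_mul, Commute, SemiconjBy] using this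
  · right
    have := fg2_map K.subtype_injective hc
    simpa [pow_mul] using this

lemma pa_subgroupOf {K H : Subgroup G} (h : PowerAlternative K) :
    PowerAlternative (K.subgroupOf H) := by
  refine pa_of_injective (G' := K)
    { toFun := fun x => ⟨(x : H), x.2⟩,
      map_one' := rfl,
      map_mul' := fun _ _ => rfl } ?_ h
  intro a b hab
  ext
  exact congrArg (fun t : K => (t : G)) hab

lemma mem_conjSubgroup_iff (g : G) (K : Subgroup G) (x : G) :
    g * x * g⁻¹ ∈ conjSubgroup g K ↔ x ∈ K := by
  constructor
  · rintro ⟨y, hy, hyx⟩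
    simp only [MulEquiv.coe_toMonoidHom, MulAut.conj_apply] at hyx
    have : y = x := by
      have := hyx
      group at this ⊢
      exact mul_left_cancel (mul_right_cancel this)
    rwa [← this]
  · intro hx
    exact ⟨x, hx, by simp [MulAut.conj_apply]⟩

lemma mem_normalizer_of_conjSubgroup_eq {z : G} {K : Subgroup G}
    (h : conjSubgroup z K = K) : z ∈ Subgroup.normalizer (K : Set G) := by
  rw [Subgroup.mem_normalizer_iff]
  intro x
  constructor
  · intro hx
    rw [← h]
    exact (mem_conjSubgroup_iff z K x).mpr hx
  · intro hx
    rw [← h] at hx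
    exact (mem_conjSubgroup_iff z K x).mp hx

lemma closure_union_decomp {N : Subgroup G} {z : G} (hzn : z ∈ Subgroup.normalizer (N : Set G))
    {T : Set G} (hT : T ⊆ N) :
    ∀ h ∈ Subgroup.closure (T ∪ {z}), ∃ i : ℤ, ∃ n ∈ N, h = z ^ i * n := by
  have hconj : ∀ (j : ℤ), ∀ n ∈ N, z ^ j * n * (z ^ j)⁻¹ ∈ N := by
    intro j n hn
    have hj : z ^ j ∈ Subgroup.normalizer (N : Set G) := zpow_mem hzn j
    exact (Subgroup.mem_normalizer_iff.mp hj n).mp hn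
  intro h hh
  induction hh using Subgroup.closure_induction with
  | mem x hx =>
    rcases hx with hx | hx
    · exact ⟨0, x, hT hx, by simp⟩
    · exact ⟨1, 1, one_mem N, by simp at hx; simp [hx]⟩
  | one => exact ⟨0, 1, one_mem N, by simp⟩
  | mul x y hx hy ihx ihy =>
    obtain ⟨i, n, hn, rfl⟩ := ihx
    obtain ⟨j, n', hn', rfl⟩ := ihy
    refine ⟨i + j, (z ^ j)⁻¹ * n * z ^ j * n', ?_, by group⟩
    have : (z ^ (-j)) * n * (z ^ (-j))⁻¹ ∈ N := hconj (-j) n hn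
    simp only [zpow_neg, inv_inv] at this
    exact mul_mem this hn'
  | inv x hx ihx =>
    obtain ⟨i, n, hn, rfl⟩ := ihx
    refine ⟨-i, z ^ i * n⁻¹ * (z ^ i)⁻¹, hconj i n⁻¹ (inv_mem hn), by group⟩

lemma relindex_ne_zero_aux {N H : Subgroup G} {z : G} {k : ℕ} (hk : 0 < k)
    (hzH : z ∈ H) (hzk : z ^ k ∈ N)
    (hdec : ∀ h ∈ H, ∃ i : ℤ, ∃ n ∈ N, h = z ^ i * n) :
    N.relIndex H ≠ 0 := by
  have hfin : Finite (H ⧸ N.subgroupOf H) := by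
    have hsurj : Function.Surjective
        (fun j : Fin k => (QuotientGroup.mk (⟨z, hzH⟩ ^ (j : ℕ) : H) : H ⧸ N.subgroupOf H)) := by
      rintro q
      induction q using QuotientGroup.induction_on with
      | H h =>
        obtain ⟨i, n, hn, hdecomp⟩ := hdec (h : G) h.2
        have hkz : (k : ℤ) ≠ 0 := by exact_mod_cast hk.ne'
        refine ⟨⟨(i % k).toNat, ?_⟩, ?_⟩
        · have h1 : 0 ≤ i % k := Int.emod_nonneg i hkz
          have h2 : i % k < k := Int.emod_lt_of_pos i (by exact_mod_cast hk)
          omega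
        · symm
          rw [QuotientGroup.eq]
          rw [Subgroup.mem_subgroupOf]
          have ht : (((i % k).toNat : ℕ) : ℤ) = i % k :=
            Int.toNat_of_nonneg (Int.emod_nonneg i hkz)
          have hmem : z ^ (i - i % k) ∈ N := by
            have he : i - i % k = (k : ℤ) * (i / k) := by
              have := Int.emod_add_mul_ediv i (k : ℤ)
              linarith
            rw [he, zpow_mul, zpow_natCast]
            exact zpow_mem hzk (i / k)
          have hco : ((h⁻¹ * ⟨z, hzH⟩ ^ ((i % (k:ℤ)).toNat) : H) : G)
              = (h : G)⁻¹ * z ^ ((i % (k:ℤ)).toNat) := by push_cast; ring_nf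
          show ((h⁻¹ * ⟨z, hzH⟩ ^ ((i % (k:ℤ)).toNat) : H) : G) ∈ N
          rw [hco, hdecomp, ← zpow_natCast z ((i % (k:ℤ)).toNat), ht]
          have heq : (z ^ i * n)⁻¹ * z ^ (i % (k:ℤ)) = n⁻¹ * z ^ (i % (k:ℤ) - i) := by
            rw [mul_inv_rev, mul_assoc, ← zpow_neg, ← zpow_add]
            congr 2
            ring
          rw [heq]
          have hiv : z ^ (i % (k:ℤ) - i) = (z ^ (i - i % (k:ℤ)))⁻¹ := by
            rw [← zpow_neg]
            congr 1
            ring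
          rw [hiv]
          exact mul_mem (inv_mem hn) (inv_mem hmem)
    exact Finite.of_surjective _ hsurj
  exact Subgroup.index_ne_zero_of_finite (hH := hfin)

end Aux

set_option maxHeartbeats 1000000 in
/-- mapping tori of parabolic subgroups in a visual splitting satisfy
the power alternative. -/
theorem artin_visual_splitting_mapping_torus_power_alternative
    {V : Type*} [Fintype V] (Γ : SimpleGraph V) (m : V → V → ℕ)
    (hsymm : ∀ s t : V, m s t = m t s)
    (hlabel : ∀ s t : V, Γ.Adj s t → 2 ≤ m s t)
    (V₁ V₂ : Set V)
    (hunion : V₁ ∪ V₂ = Set.univ)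
    (hV₁ : V₁ ≠ Set.univ) (hV₂ : V₂ ≠ Set.univ)
    (hV₀ : (V₁ ∩ V₂).Nonempty)
    (hPA₁ : PowerAlternative (standardParabolic Γ m V₁))
    (hPA₂ : PowerAlternative (standardParabolic Γ m V₂))
    (hPIP : ParabolicIntersectionProperty Γ m)
    (hNSP : NormaliserStructureProperty Γ m)
    (S : Set V) (hS : S ⊆ V₁ ∨ S ⊆ V₂)
    (g₀ : ArtinGroup Γ m)
    (P : Subgroup (ArtinGroup Γ m)) (hP : P = conjSubgroup g₀ (standardParabolic Γ m S))
    (z : ArtinGroup Γ m) (hz : conjSubgroup z P = P)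
    (H : Subgroup (ArtinGroup Γ m))
    (hH : H = Subgroup.closure ((P : Set (ArtinGroup Γ m)) ∪ {z})) :
    (P.relIndex H ≠ 0 ∨
      ∃ H' : Subgroup (ArtinGroup Γ m), H' ≤ H ∧ H'.relIndex H ≠ 0 ∧
        Nonempty (H' ≃* (P × Multiplicative ℤ))) ∧
    PowerAlternative H := by
  classical
  have hPH : P ≤ H := by
    rw [hH]; intro x hx; exact Subgroup.subset_closure (Or.inl hx)
  have hzH : z ∈ H := by rw [hH]; exact Subgroup.subset_closure (Or.inr rfl)
  have hznorm : z ∈ Subgroup.normalizer (P : Set (ArtinGroup Γ m)) := mem_normalizer_of_conjSubgroup_eq hz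
  -- power alternative for the standard parabolic on S, hence for P
  have hPAS : PowerAlternative (standardParabolic Γ m S) := by
    rcases hS with h1 | h1
    · exact pa_of_injective (Subgroup.inclusion (Subgroup.closure_mono (Set.image_mono h1)))
        (Subgroup.inclusion_injective _) hPA₁
    · exact pa_of_injective (Subgroup.inclusion (Subgroup.closure_mono (Set.image_mono h1)))
        (Subgroup.inclusion_injective _) hPA₂
  have hPAP : PowerAlternative P := by
    have e1 : (standardParabolic Γ m S) ≃* conjSubgroup g₀ (standardParabolic Γ m S) :=
      MulEquiv.subgroupMap (MulAut.conj g₀) _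
    have e2 : P ≃* (standardParabolic Γ m S) := (MulEquiv.subgroupCongr hP).trans e1.symm
    exact pa_of_injective e2.toMonoidHom e2.injective hPAS
  by_cases hcase : ∃ n : ℕ, 1 ≤ n ∧ z ^ n ∈ P
  · -- P has finite index in H
    obtain ⟨k, hk, hzk⟩ := hcase
    have hdec : ∀ h ∈ H, ∃ i : ℤ, ∃ n ∈ P, h = z ^ i * n := by
      rw [hH]
      exact closure_union_decomp hznorm (fun x hx => hx)
    have hrel : P.relIndex H ≠ 0 := relindex_ne_zero_aux hk hzH hzk hdec
    refine ⟨Or.inl hrel, ?_⟩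
    exact pa_of_finite_index (P.subgroupOf H) hrel (pa_subgroupOf hPAP)
  · -- construct H' ≅ P × ℤ of finite index in H
    -- membership translations
    have hmemP : ∀ x, g₀ * x * g₀⁻¹ ∈ P ↔ x ∈ standardParabolic Γ m S := by
      intro x
      conv_lhs => rw [hP]
      exact mem_conjSubgroup_iff _ _ _
    have hmemz : ∀ x, z * x * z⁻¹ ∈ P ↔ x ∈ P := by
      intro x
      conv_lhs => rw [← hz]
      exact mem_conjSubgroup_iff _ _ _
    -- g₀⁻¹ z g₀ normalizes the standard parabolic on S
    have hwnorm : g₀⁻¹ * z * g₀ ∈ Subgroup.normalizer (standardParabolic Γ m S : Set (ArtinGroup Γ m)) := by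
      rw [Subgroup.mem_normalizer_iff]
      intro x
      calc x ∈ standardParabolic Γ m S
          ↔ g₀ * x * g₀⁻¹ ∈ P := (hmemP x).symm
        _ ↔ z * (g₀ * x * g₀⁻¹) * z⁻¹ ∈ P := (hmemz _).symm
        _ ↔ g₀ * ((g₀⁻¹ * z * g₀) * x * (g₀⁻¹ * z * g₀)⁻¹) * g₀⁻¹ ∈ P := by
            rw [show g₀ * ((g₀⁻¹ * z * g₀) * x * (g₀⁻¹ * z * g₀)⁻¹) * g₀⁻¹
                = z * (g₀ * x * g₀⁻¹) * z⁻¹ by group]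
        _ ↔ (g₀⁻¹ * z * g₀) * x * (g₀⁻¹ * z * g₀)⁻¹ ∈ standardParabolic Γ m S := hmemP _
    -- apply the normaliser structure property
    have hwmem : (g₀⁻¹ * z * g₀) ∈
        ((Subgroup.normalizer (standardParabolic Γ m S : Set (ArtinGroup Γ m))) : Set (ArtinGroup Γ m)) := hwnorm
    rw [hNSP S] at hwmem
    obtain ⟨a, ha, q, hq, hwaq⟩ := hwmem
    -- conjugation by q permutes the finite generating set
    have hΩfin' : Finite ↥(artinGen Γ m '' S) := ((Set.toFinite S).image _).to_subtype
    have hf : ∀ x : ↥(artinGen Γ m '' S),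
        q * (x : ArtinGroup Γ m) * q⁻¹ ∈ artinGen Γ m '' S := by
      intro x
      have hmem : q * (x : ArtinGroup Γ m) * q⁻¹
          ∈ (fun y => q * y * q⁻¹) '' (artinGen Γ m '' S) := ⟨x, x.2, rfl⟩
      rwa [hq] at hmem
    set f : ↥(artinGen Γ m '' S) → ↥(artinGen Γ m '' S) :=
      fun x => ⟨q * (x : ArtinGroup Γ m) * q⁻¹, hf x⟩ with hfdef
    have hfinj : Function.Injective f := by
      intro x y hxy
      have := congrArg Subtype.val hxy
      simp only [hfdef] at this
      exact Subtype.ext (mul_left_cancel (mul_right_cancel this))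
    set e : ↥(artinGen Γ m '' S) ≃ ↥(artinGen Γ m '' S) :=
      Equiv.ofBijective f (Finite.injective_iff_bijective.mp hfinj) with hedef
    set k : ℕ := orderOf e with hkdef
    have hk : 0 < k := orderOf_pos e
    have hiter : ∀ (j : ℕ) (x : ↥(artinGen Γ m '' S)), (((e ^ j) x) : ArtinGroup Γ m)
        = q ^ j * (x : ArtinGroup Γ m) * (q ^ j)⁻¹ := by
      intro j
      induction j with
      | zero => intro x; simp
      | succ j ih =>
        intro x
        rw [pow_succ, Equiv.Perm.mul_apply]
        have h1 : (((e ^ j) (e x)) : ArtinGroup Γ m)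
            = q ^ j * ((e x) : ArtinGroup Γ m) * (q ^ j)⁻¹ := ih (e x)
        have h2 : ((e x) : ArtinGroup Γ m) = q * (x : ArtinGroup Γ m) * q⁻¹ := rfl
        rw [h1, h2, pow_succ]
        group
    have hfix : ∀ x ∈ artinGen Γ m '' S, q ^ k * x * (q ^ k)⁻¹ = x := by
      intro x hx
      have h1 := hiter k ⟨x, hx⟩
      rw [pow_orderOf_eq_one e] at h1
      simpa using h1.symm
    -- q ^ k centralizes the standard parabolic
    have hcent : ∀ g ∈ standardParabolic Γ m S, Commute (q ^ k) g := by
      have hle : standardParabolic Γ m S ≤ Subgroup.centralizer {q ^ k} := by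
        rw [standardParabolic, Subgroup.closure_le]
        intro x hx
        rw [SetLike.mem_coe, Subgroup.mem_centralizer_iff]
        intro g hg
        rw [Set.mem_singleton_iff] at hg
        subst hg
        have := hfix x hx
        rw [mul_inv_eq_iff_eq_mul] at this
        exact this
      intro g hg
      exact Subgroup.mem_centralizer_iff.mp (hle hg) _ (Set.mem_singleton _)
    -- q normalizes the standard parabolic
    have hqconj : conjSubgroup q (standardParabolic Γ m S) = standardParabolic Γ m S := by
      have himg : ⇑(MulAut.conj q).toMonoidHom '' (artinGen Γ m '' S) = artinGen Γ m '' S := by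
        rw [show ⇑(MulAut.conj q).toMonoidHom = (fun y => q * y * q⁻¹) from
          funext fun y => by simp [MulAut.conj_apply]]
        exact hq
      show Subgroup.map _ _ = _
      rw [standardParabolic, MonoidHom.map_closure, himg]
    have hqnorm : q ∈ Subgroup.normalizer (standardParabolic Γ m S : Set (ArtinGroup Γ m)) :=
      mem_normalizer_of_conjSubgroup_eq hqconj
    -- powers of a*q decompose
    have hdecompk : ∀ j : ℕ, ∃ b ∈ standardParabolic Γ m S, (a * q) ^ j = b * q ^ j := by
      intro j
      induction j with
      | zero => exact ⟨1, one_mem _, by simp⟩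
      | succ j ih =>
        obtain ⟨b, hb, hbe⟩ := ih
        refine ⟨b * (q ^ j * a * (q ^ j)⁻¹),
          mul_mem hb ((Subgroup.mem_normalizer_iff.mp (pow_mem hqnorm j) a).mp ha), ?_⟩
        rw [pow_succ, hbe, pow_succ]
        group
    have hzg : z = g₀ * (a * q) * g₀⁻¹ := by
      rw [← hwaq]
      group
    obtain ⟨b, hb, hbk⟩ := hdecompk k
    set p : ArtinGroup Γ m := g₀ * b * g₀⁻¹ with hpdef
    set c : ArtinGroup Γ m := g₀ * q ^ k * g₀⁻¹ with hcdef
    have hpP : p ∈ P := by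
      rw [hP]
      exact ⟨b, hb, by simp [MulAut.conj_apply, hpdef]⟩
    have hzkpc : z ^ k = p * c := by
      rw [hzg, conj_pow, hbk, hpdef, hcdef]
      group
    have hcP : ∀ x ∈ P, Commute c x := by
      intro x hx
      rw [hP] at hx
      obtain ⟨y, hy, rfl⟩ := hx
      have hcy := hcent y hy
      simp only [MulEquiv.coe_toMonoidHom, MulAut.conj_apply]
      unfold Commute SemiconjBy
      calc c * (g₀ * y * g₀⁻¹) = g₀ * (q ^ k * y) * g₀⁻¹ := by rw [hcdef]; group
        _ = g₀ * (y * q ^ k) * g₀⁻¹ := by rw [hcy.eq]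
        _ = (g₀ * y * g₀⁻¹) * c := by rw [hcdef]; group
    have hcz : Commute c z := by
      have hq1 : Commute (q ^ k) (a * q) :=
        (hcent a ha).mul_right ((Commute.refl q).pow_left k)
      unfold Commute SemiconjBy
      calc c * z = g₀ * (q ^ k * (a * q)) * g₀⁻¹ := by rw [hcdef, hzg]; group
        _ = g₀ * ((a * q) * q ^ k) * g₀⁻¹ := by rw [hq1.eq]
        _ = z * c := by rw [hcdef, hzg]; group
    -- the subgroup H'
    set H' : Subgroup (ArtinGroup Γ m) :=
      Subgroup.closure ((P : Set (ArtinGroup Γ m)) ∪ {c}) with hH'def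
    have hPH' : ∀ x ∈ P, x ∈ H' := fun x hx => Subgroup.subset_closure (Or.inl hx)
    have hcH' : c ∈ H' := Subgroup.subset_closure (Or.inr rfl)
    have hcH : c ∈ H := by
      have hc1 : c = p⁻¹ * z ^ k := by rw [hzkpc]; group
      rw [hc1]
      exact mul_mem (inv_mem (hPH hpP)) (pow_mem hzH k)
    have hH'H : H' ≤ H := by
      rw [hH'def, Subgroup.closure_le]
      rintro x (hx | hx)
      · exact hPH hx
      · rw [Set.mem_singleton_iff] at hx
        subst hx
        exact hcH
    have hzkH' : z ^ k ∈ H' := by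
      rw [hzkpc]
      exact mul_mem (hPH' p hpP) hcH'
    have hzH'conj : conjSubgroup z H' = H' := by
      show Subgroup.map _ _ = _
      rw [hH'def, MonoidHom.map_closure]
      congr 1
      rw [Set.image_union, Set.image_singleton]
      congr 1
      · rw [show ⇑(MulAut.conj z).toMonoidHom '' (P : Set (ArtinGroup Γ m))
            = ((conjSubgroup z P : Subgroup (ArtinGroup Γ m)) : Set (ArtinGroup Γ m)) from
          (Subgroup.coe_map _ _).symm, hz]
      · have hzc : (MulAut.conj z).toMonoidHom c = c := by
          simp only [MulEquiv.coe_toMonoidHom, MulAut.conj_apply]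
          rw [mul_inv_eq_iff_eq_mul]
          exact hcz.symm.eq
        rw [hzc]
    have hzH'norm : z ∈ Subgroup.normalizer (H' : Set (ArtinGroup Γ m)) := mem_normalizer_of_conjSubgroup_eq hzH'conj
    have hdecB : ∀ h ∈ H, ∃ i : ℤ, ∃ n ∈ H', h = z ^ i * n := by
      rw [hH]
      exact closure_union_decomp hzH'norm (fun x hx => hPH' x hx)
    have hrelB : H'.relIndex H ≠ 0 := relindex_ne_zero_aux hk hzH hzkH' hdecB
    -- the isomorphism H' ≃* P × ℤ
    have hcomm : ∀ (x : P) (n : Multiplicative ℤ),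
        Commute (P.subtype x) (zpowersHom (ArtinGroup Γ m) c n) := by
      intro x n
      rw [zpowersHom_apply]
      exact ((hcP x x.2).symm.zpow_right n.toAdd)
    set φ : P × Multiplicative ℤ →* ArtinGroup Γ m :=
      MonoidHom.noncommCoprod P.subtype (zpowersHom (ArtinGroup Γ m) c) hcomm with hφdef
    have hφapply : ∀ (x : P) (n : Multiplicative ℤ), φ (x, n) = (x : ArtinGroup Γ m) ^ 1 * c ^ n.toAdd := by
      intro x n
      simp [hφdef, MonoidHom.noncommCoprod_apply, zpowersHom_apply]
    have hφinj : Function.Injective φ := by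
      rw [injective_iff_map_eq_one]
      rintro ⟨x, n⟩ h1
      have h2 : (x : ArtinGroup Γ m) * c ^ n.toAdd = 1 := by
        have := hφapply x n
        rw [h1] at this
        simpa using this.symm
      by_cases hn0 : n.toAdd = 0
      · have : (x : ArtinGroup Γ m) = 1 := by
          rw [hn0, zpow_zero, mul_one] at h2
          exact h2
        have hx1 : x = 1 := Subtype.ext this
        have hn1 : n = 1 := by
          rwa [← toAdd_eq_zero]
        rw [hx1, hn1]
        rfl
      · exfalso
        have hcn : c ^ n.toAdd ∈ P := by
          rw [← inv_eq_of_mul_eq_one_right h2]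
          exact inv_mem x.2
        have hzkn : z ^ ((k : ℤ) * n.toAdd) ∈ P := by
          rw [zpow_mul, zpow_natCast, hzkpc, ((hcP p hpP).symm.mul_zpow n.toAdd)]
          exact mul_mem (zpow_mem hpP n.toAdd) hcn
        have hM1 : 1 ≤ ((k : ℤ) * n.toAdd).natAbs := by
          have : (k : ℤ) * n.toAdd ≠ 0 := by
            simp [Int.mul_ne_zero_iff, hn0]
            omega
          omega
        refine hcase ⟨((k : ℤ) * n.toAdd).natAbs, hM1, ?_⟩
        rcases Int.natAbs_eq ((k : ℤ) * n.toAdd) with he | he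
        · rw [← zpow_natCast, ← he]
          exact hzkn
        · rw [← zpow_natCast, show ((((k : ℤ) * n.toAdd).natAbs : ℤ)) = -((k : ℤ) * n.toAdd) by omega,
            zpow_neg]
          exact inv_mem hzkn
    have hφrange : φ.range = H' := by
      apply le_antisymm
      · rintro x ⟨⟨y, n⟩, rfl⟩
        have := hφapply y n
        rw [this]
        simp only [pow_one]
        exact mul_mem (hPH' y y.2) (zpow_mem hcH' n.toAdd)
      · rw [hH'def, Subgroup.closure_le]
        rintro x (hx | hx)
        · exact ⟨(⟨x, hx⟩, 1), by simpa using hφapply ⟨x, hx⟩ 1⟩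
        · rw [Set.mem_singleton_iff] at hx
          subst hx
          refine ⟨(1, Multiplicative.ofAdd 1), ?_⟩
          have := hφapply 1 (Multiplicative.ofAdd 1)
          rw [this]
          simp
    have hiso : H' ≃* (P × Multiplicative ℤ) :=
      (MulEquiv.subgroupCongr hφrange).symm.trans (MonoidHom.ofInjective hφinj).symm
    refine ⟨Or.inr ⟨H', hH'H, hrelB, ⟨hiso⟩⟩, ?_⟩
    exact pa_of_finite_index (H'.subgroupOf H) hrelB
      (pa_subgroupOf (pa_of_injective hiso.toMonoidHom hiso.injective (pa_prod_int hPAP)))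
end

section
/- Let G and H be groups and let G' be a subgroup of G of finite index such that there exists an injective group homomorphism from G' into H. If H satisfies the power alternative, then G satisfies the power alternative. -/
/-- the power alternative passes to finite-index overgroups of subgroups
of groups satisfying it. -/
theorem power_alternative_of_finite_index_subgroup_embedding
    {G H : Type*} [Group G] [Group H] (G' : Subgroup G)
    (hindex : G'.index ≠ 0)
    (hembed : ∃ f : G' →* H, Function.Injective f)
    (hH : PowerAlternative H) :
    PowerAlternative G := by
  obtain ⟨f, hf⟩ := hembed
  intro g h
  haveI : G'.FiniteIndex := ⟨hindex⟩
  haveI := Subgroup.finiteIndex_normalCore G'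
  set k := G'.normalCore.index with hk
  have hk0 : k ≠ 0 := Subgroup.FiniteIndex.index_ne_zero
  have hg : g ^ k ∈ G' := G'.normalCore_le (G'.normalCore.pow_index_mem g)
  have hh : h ^ k ∈ G' := G'.normalCore_le (G'.normalCore.pow_index_mem h)
  obtain ⟨n, hn1, hcase⟩ := hH (f ⟨g ^ k, hg⟩) (f ⟨h ^ k, hh⟩)
  refine ⟨k * n, Nat.one_le_iff_ne_zero.mpr (Nat.mul_ne_zero hk0 (by omega)), ?_⟩
  set a : G' := ⟨g ^ k, hg⟩ ^ n with ha
  set b : G' := ⟨h ^ k, hh⟩ ^ n with hb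
  have hga : g ^ (k * n) = (a : G) := by simp [ha, pow_mul]
  have hhb : h ^ (k * n) = (b : G) := by simp [hb, pow_mul]
  rcases hcase with hc | hfree
  · left
    rw [hga, hhb]
    have hab : Commute a b := by
      have hc' : Commute (f a) (f b) := by rw [ha, hb, map_pow, map_pow]; exact hc
      exact hf (by rw [map_mul, map_mul, hc'.eq])
    exact hab.map G'.subtype
  · right
    unfold FreelyGenerateF2 at hfree ⊢
    rw [hga, hhb]
    set L : FreeGroup (Fin 2) →* G' :=
      FreeGroup.lift (fun i : Fin 2 => if i = 0 then a else b) with hL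
    have hcompH : f.comp L =
        (FreeGroup.lift (fun i : Fin 2 =>
          if i = 0 then f ⟨g ^ k, hg⟩ ^ n else f ⟨h ^ k, hh⟩ ^ n)) := by
      apply FreeGroup.ext_hom
      intro i
      rcases Fin.exists_fin_two.mp ⟨i, rfl⟩ with h' | h' <;> subst h' <;>
        simp only [hL, MonoidHom.comp_apply, FreeGroup.lift_apply_of] <;>
        simp [ha, hb, map_pow, -SubmonoidClass.mk_pow]
    have hLinj : Function.Injective L := by
      have : Function.Injective (f.comp L) := by rw [hcompH]; exact hfree
      exact Function.Injective.of_comp this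
    have hcompG : (FreeGroup.lift (fun i : Fin 2 =>
        if i = 0 then (a : G) else (b : G))) = G'.subtype.comp L := by
      apply FreeGroup.ext_hom
      intro i
      simp [hL, apply_ite (fun x : G' => (x : G))]
    rw [hcompG]
    exact Subtype.coe_injective.comp hLinj
end

section
/- Let G₁ and G₂ be groups. If G₁ and G₂ both satisfy the power alternative, then the direct product G₁ × G₂ satisfies the power alternative. -/
lemma freelyGenerate_of_map {G H : Type*} [Group G] [Group H] (φ : G →* H) {x y : G}
    (h : FreelyGenerateF2 (φ x) (φ y)) : FreelyGenerateF2 x y := by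
  unfold FreelyGenerateF2 at *
  have key : φ.comp (FreeGroup.lift (fun i : Fin 2 => if i = 0 then x else y)) =
      (FreeGroup.lift (fun i : Fin 2 => if i = 0 then φ x else φ y) : FreeGroup (Fin 2) →* H) := by
    apply FreeGroup.ext_hom
    intro i
    simp [apply_ite φ]
  intro a b hab
  apply h
  rw [← key]
  simp [hab]

/-- the power alternative is stable under direct products. -/
theorem power_alternative_prod
    {G₁ G₂ : Type*} [Group G₁] [Group G₂]
    (h₁ : PowerAlternative G₁) (h₂ : PowerAlternative G₂) :
    PowerAlternative (G₁ × G₂) := by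
  intro g h
  obtain ⟨n, hn1, hn⟩ := h₁ g.1 h.1
  rcases hn with hc | hf
  · obtain ⟨m, hm1, hm⟩ := h₂ (g.2 ^ n) (h.2 ^ n)
    rcases hm with hc2 | hf2
    · refine ⟨n * m, Nat.one_le_iff_ne_zero.2 (by positivity), Or.inl ?_⟩
      have c1 : Commute (g.1 ^ (n * m)) (h.1 ^ (n * m)) := by
        simpa [pow_mul] using hc.pow_pow m m
      have c2 : Commute (g.2 ^ (n * m)) (h.2 ^ (n * m)) := by
        simpa [pow_mul] using hc2
      exact Prod.ext (by simpa using c1.eq) (by simpa using c2.eq)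
    · refine ⟨n * m, Nat.one_le_iff_ne_zero.2 (by positivity), Or.inr ?_⟩
      apply freelyGenerate_of_map (MonoidHom.snd G₁ G₂)
      simpa [pow_mul] using hf2
  · refine ⟨n, hn1, Or.inr ?_⟩
    apply freelyGenerate_of_map (MonoidHom.fst G₁ G₂)
    simpa using hf
end

section
/- For every integer n ≥ 2, the Baumslag–Solitar group BS(1,n) = ⟨a, b ∣ b·a·b⁻¹ = aⁿ⟩ (the presented group on two generators a, b with the single relator b·a·b⁻¹·a⁻ⁿ) does not satisfy the power alternative: there exist g, h ∈ BS(1,n) such that for every k ≥ 1, gᵏ and hᵏ do not commute and gᵏ and hᵏ do not freely generate a free subgroup of rank 2. -/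
/-- The single relator `b a b⁻¹ a⁻ⁿ` of the Baumslag–Solitar group `BS(1,n)`,
with `a` the generator indexed by `0` and `b` the generator indexed by `1`. -/
def bsRels (n : ℕ) : Set (FreeGroup (Fin 2)) :=
  {FreeGroup.of 1 * FreeGroup.of 0 * (FreeGroup.of 1)⁻¹ * (FreeGroup.of 0 ^ n)⁻¹}

/-- The Baumslag–Solitar group `BS(1,n) = ⟨a, b ∣ b a b⁻¹ = aⁿ⟩`. -/
abbrev BaumslagSolitar (n : ℕ) : Type := PresentedGroup (bsRels n)

noncomputable def bsF (n : ℕ) (hn : 2 ≤ n) : Fin 2 → Equiv.Perm ℚ :=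
  fun i => if i = 0 then Equiv.addRight (1 : ℚ)
    else Equiv.mulLeft₀ (n : ℚ) (by positivity)

lemma addRight_pow (m : ℕ) : ∀ x : ℚ, ((Equiv.addRight (1:ℚ)) ^ m) x = x + m := by
  induction m with
  | zero => intro x; simp
  | succ k ih =>
    intro x
    rw [pow_succ, Equiv.Perm.mul_apply, Equiv.coe_addRight, ih]
    push_cast; ring

lemma mulLeft₀_pow (c : ℚ) (hc : c ≠ 0) (m : ℕ) :
    ∀ x : ℚ, ((Equiv.mulLeft₀ c hc) ^ m) x = c ^ m * x := by
  induction m with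
  | zero => intro x; simp
  | succ k ih =>
    intro x
    rw [pow_succ, Equiv.Perm.mul_apply]
    have h : (Equiv.mulLeft₀ c hc) x = c * x := rfl
    rw [h, ih]; ring

lemma bs_rel_holds (n : ℕ) (hn : 2 ≤ n) :
    ∀ r ∈ bsRels n, FreeGroup.lift (bsF n hn) r = 1 := by
  intro r hr
  rw [bsRels, Set.mem_singleton_iff] at hr
  subst hr
  have hc : (n:ℚ) ≠ 0 := by positivity
  simp only [map_mul, map_inv, map_pow, FreeGroup.lift_apply_of, bsF]
  norm_num
  ext x
  simp [Equiv.mulLeft₀, Equiv.Perm.mul_apply, Equiv.Perm.inv_def]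
  field_simp
  ring

/-- The basic relation `b a b⁻¹ = a ^ n` in `BS(1,n)`. -/
lemma bs_rel (n : ℕ) :
    (PresentedGroup.of 1 : BaumslagSolitar n) * PresentedGroup.of 0 *
      (PresentedGroup.of 1)⁻¹ = (PresentedGroup.of 0) ^ n := by
  have hmem : (FreeGroup.of 1 * FreeGroup.of 0 * (FreeGroup.of 1)⁻¹ *
      (FreeGroup.of 0 ^ n)⁻¹ : FreeGroup (Fin 2)) ∈ Subgroup.normalClosure (bsRels n) :=
    Subgroup.subset_normalClosure (by simp [bsRels])
  have h1 : (PresentedGroup.mk (bsRels n)) (FreeGroup.of 1 * FreeGroup.of 0 *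
      (FreeGroup.of 1)⁻¹ * (FreeGroup.of 0 ^ n)⁻¹) = 1 :=
    (QuotientGroup.eq_one_iff _).mpr hmem
  simp only [map_mul, map_inv, map_pow] at h1
  have := mul_inv_eq_one.mp h1
  simpa [PresentedGroup.of] using this

lemma bs_conj_pow (n : ℕ) (k m : ℕ) :
    (PresentedGroup.of 1 : BaumslagSolitar n) ^ k * (PresentedGroup.of 0) ^ m *
      ((PresentedGroup.of 1) ^ k)⁻¹ = (PresentedGroup.of 0) ^ (n ^ k * m) := by
  induction k generalizing m with
  | zero => simp
  | succ j ih =>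
    set A : BaumslagSolitar n := PresentedGroup.of 0
    set B : BaumslagSolitar n := PresentedGroup.of 1
    have hstep : B * A ^ m * B⁻¹ = A ^ (n * m) := by
      calc B * A ^ m * B⁻¹ = (B * A * B⁻¹) ^ m := by rw [conj_pow]
        _ = (A ^ n) ^ m := by rw [bs_rel]
        _ = A ^ (n * m) := by rw [← pow_mul]
    calc B ^ (j + 1) * A ^ m * (B ^ (j + 1))⁻¹
        = B ^ j * (B * A ^ m * B⁻¹) * (B ^ j)⁻¹ := by
          rw [pow_succ, mul_inv_rev]; group
      _ = B ^ j * A ^ (n * m) * (B ^ j)⁻¹ := by rw [hstep]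
      _ = A ^ (n ^ j * (n * m)) := ih (n * m)
      _ = A ^ (n ^ (j + 1) * m) := by ring_nf

/-- `BS(1,n)` does not satisfy the power alternative for `n ≥ 2`. -/
theorem baumslag_solitar_not_power_alternative (n : ℕ) (hn : 2 ≤ n) :
    ∃ g h : BaumslagSolitar n, ∀ k : ℕ, 1 ≤ k →
      ¬Commute (g ^ k) (h ^ k) ∧ ¬FreelyGenerateF2 (g ^ k) (h ^ k) := by
  set A : BaumslagSolitar n := PresentedGroup.of 0 with hA
  set B : BaumslagSolitar n := PresentedGroup.of 1 with hB
  refine ⟨A, B, fun k hk => ⟨?_, ?_⟩⟩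
  · -- not commuting, via the affine representation
    intro hcomm
    set φ : BaumslagSolitar n →* Equiv.Perm ℚ := PresentedGroup.toGroup (bs_rel_holds n hn)
    have hφA : φ A = Equiv.addRight (1:ℚ) := by
      rw [hA, PresentedGroup.toGroup.of]; simp [bsF]
    have hc : (n:ℚ) ≠ 0 := by positivity
    have hφB : φ B = Equiv.mulLeft₀ (n:ℚ) hc := by
      rw [hB, PresentedGroup.toGroup.of]; simp [bsF]
    have h2 : φ (A ^ k) * φ (B ^ k) = φ (B ^ k) * φ (A ^ k) := by
      rw [← map_mul, ← map_mul, hcomm.eq]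
    have h3 := congrFun (congrArg (fun σ : Equiv.Perm ℚ => (σ : ℚ → ℚ)) h2) 0
    simp only [map_pow, hφA, hφB, Equiv.Perm.mul_apply] at h3
    rw [mulLeft₀_pow, addRight_pow, addRight_pow, mulLeft₀_pow] at h3
    have hnk : (2:ℚ) ≤ (n:ℚ) ^ k := by
      calc (2:ℚ) = 2 ^ 1 := by norm_num
        _ ≤ 2 ^ k := by exact pow_le_pow_right₀ (by norm_num) hk
        _ ≤ (n:ℚ) ^ k := by
            apply pow_le_pow_left₀ (by norm_num)
            exact_mod_cast hn
    have hk1 : (1:ℚ) ≤ (k:ℚ) := by exact_mod_cast hk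
    nlinarith [h3]
  · -- not free, via the relation
    intro hinj
    set F : FreeGroup (Fin 2) →* BaumslagSolitar n :=
      FreeGroup.lift (fun i : Fin 2 => if i = 0 then A ^ k else B ^ k)
    set w : FreeGroup (Fin 2) :=
      FreeGroup.of 1 * FreeGroup.of 0 * (FreeGroup.of 1)⁻¹ * FreeGroup.of 0 *
        (FreeGroup.of 1 * FreeGroup.of 0 * (FreeGroup.of 1)⁻¹)⁻¹ * (FreeGroup.of 0)⁻¹ with hw
    have hcomm : Commute (A ^ (n ^ k * k)) (A ^ k) := Commute.pow_pow_self A _ _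
    have hFw : F w = 1 := by
      have hF0 : F (FreeGroup.of 0) = A ^ k := by simp [F]
      have hF1 : F (FreeGroup.of 1) = B ^ k := by simp [F]
      have hconj := bs_conj_pow n k k
      rw [hw]
      simp only [map_mul, map_inv, hF0, hF1]
      rw [mul_inv_rev, mul_inv_rev, inv_inv]
      calc B ^ k * A ^ k * (B ^ k)⁻¹ * A ^ k * (B ^ k * ((A ^ k)⁻¹ * (B ^ k)⁻¹)) * (A ^ k)⁻¹
          = (B ^ k * A ^ k * (B ^ k)⁻¹) * A ^ k * (B ^ k * A ^ k * (B ^ k)⁻¹)⁻¹ * (A ^ k)⁻¹ := by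
            group
        _ = A ^ (n ^ k * k) * A ^ k * (A ^ (n ^ k * k))⁻¹ * (A ^ k)⁻¹ := by rw [hconj]
        _ = 1 := by
            rw [hcomm.eq]; group
    have : w = 1 := hinj (by rw [hFw, map_one])
    rw [hw] at this
    revert this
    decide
end

section
/- The group G = ⨁_{n ∈ ℕ} Equiv.Perm (Fin n) (the direct sum, i.e., restricted direct product, of the finite symmetric groups) satisfies the power alternative but does not satisfy the uniform power alternative: for all g, h ∈ G there exists n ≥ 1 such that gⁿ and hⁿ commute, yet for every N ≥ 1 there exist g, h ∈ G such that g^N and h^N neither commute nor freely generate a free subgroup of rank 2. -/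
/-- The restricted direct product (direct sum) of a family of groups: the subgroup of
the direct product consisting of the elements with all but finitely many coordinates
trivial. -/
def restrictedDirectProduct (ι : Type*) (M : ι → Type*) [∀ i, Group (M i)] :
    Subgroup (∀ i, M i) where
  carrier := {f | {i : ι | f i ≠ 1}.Finite}
  one_mem' := by
    have : {i : ι | (1 : ∀ i, M i) i ≠ 1} = ∅ := by
      ext i; simp
    show {i : ι | (1 : ∀ i, M i) i ≠ 1}.Finite
    rw [this]
    exact Set.finite_empty
  mul_mem' := by
    intro f g hf hg
    refine Set.Finite.subset (hf.union hg) ?_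
    intro i hi
    by_contra hmem
    simp only [Set.mem_union, Set.mem_setOf_eq, not_or, not_not] at hmem
    exact hi (by show f i * g i = 1; rw [hmem.1, hmem.2, one_mul])
  inv_mem' := by
    intro f hf
    refine Set.Finite.subset hf ?_
    intro i hi h1
    exact hi (by show (f i)⁻¹ = 1; rw [h1, inv_one])


abbrev Gperm := restrictedDirectProduct ℕ (fun n => Equiv.Perm (Fin n))

lemma mem_rdp (f : ∀ n, Equiv.Perm (Fin n)) (hf : {i : ℕ | f i ≠ 1}.Finite) :
    f ∈ restrictedDirectProduct ℕ (fun n => Equiv.Perm (Fin n)) := hf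

lemma exists_pow_eq_one_aux (g : Gperm) : ∃ n : ℕ, 1 ≤ n ∧ g ^ n = 1 := by
  have hf : {i : ℕ | (g : ∀ n, Equiv.Perm (Fin n)) i ≠ 1}.Finite := g.2
  set S := hf.toFinset with hS
  refine ⟨S.lcm (fun i => orderOf ((g : ∀ n, Equiv.Perm (Fin n)) i)), ?_, ?_⟩
  · rw [Nat.one_le_iff_ne_zero]
    intro h0
    rw [Finset.lcm_eq_zero_iff] at h0
    obtain ⟨i, _, hi⟩ := h0
    exact (orderOf_pos _).ne' hi
  · refine Subtype.ext ?_
    rw [SubmonoidClass.coe_pow]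
    funext i
    rw [Pi.pow_apply]
    by_cases hi : (g : ∀ n, Equiv.Perm (Fin n)) i = 1
    · rw [hi, one_pow]; rfl
    · exact orderOf_dvd_iff_pow_eq_one.1
        (Finset.dvd_lcm (by simp [hS, hi]))
noncomputable def gsingle (M : ℕ) (x : Equiv.Perm (Fin M)) :
    restrictedDirectProduct ℕ (fun n => Equiv.Perm (Fin n)) :=
  ⟨Pi.mulSingle (M := fun n => Equiv.Perm (Fin n)) M x,
    Set.Finite.subset (Set.finite_singleton M) (by
      intro i hi
      by_contra h
      exact hi (Pi.mulSingle_eq_of_ne (M := fun n => Equiv.Perm (Fin n)) h x))⟩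

lemma gsingle_coe (M : ℕ) (x : Equiv.Perm (Fin M)) :
    (gsingle M x : ∀ n, Equiv.Perm (Fin n)) =
      Pi.mulSingle (M := fun n => Equiv.Perm (Fin n)) M x := rfl

lemma gsingle_pow (M : ℕ) (x : Equiv.Perm (Fin M)) (n : ℕ) :
    gsingle M x ^ n = gsingle M (x ^ n) := by
  refine Subtype.ext ?_
  rw [SubmonoidClass.coe_pow, gsingle_coe, gsingle_coe]
  exact (Pi.mulSingle_pow (f := fun n => Equiv.Perm (Fin n)) M x n).symm

lemma not_commute_gsingle (M : ℕ) (x y : Equiv.Perm (Fin M)) (h : ¬Commute x y) :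
    ¬Commute (gsingle M x) (gsingle M y) := by
  intro hc
  apply h
  have h2 := congrFun (congrArg Subtype.val hc) M
  show x * y = y * x
  simpa [gsingle_coe, Pi.mul_apply, Pi.mulSingle_eq_same] using h2

lemma not_free_aux (g h : restrictedDirectProduct ℕ (fun n => Equiv.Perm (Fin n))) :
    ¬FreelyGenerateF2 g h := by
  intro hinj
  obtain ⟨n, hn, hg⟩ := exists_pow_eq_one_aux g
  have h1 : (FreeGroup.lift (fun i : Fin 2 => if i = 0 then g else h))
      ((FreeGroup.of (0 : Fin 2)) ^ n) = 1 := by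
    rw [map_pow, FreeGroup.lift_apply_of, if_pos rfl, hg]
  have h2 : (FreeGroup.of (0 : Fin 2)) ^ n = 1 := hinj (by rw [h1, map_one])
  have h3 := congrArg (FreeGroup.lift (fun _ : Fin 2 => Multiplicative.ofAdd (1 : ℤ))) h2
  simp only [map_pow, FreeGroup.lift_apply_of, map_one] at h3
  have h4 : ((n : ℤ)) = 0 := by simpa using congrArg Multiplicative.toAdd h3
  have : n = 0 := by exact_mod_cast h4
  omega

open Fin.CommRing in
lemma noncommute_general (N : ℕ) (hN : 3 ≤ N) :
    ∃ (M : ℕ) (x y : Equiv.Perm (Fin M)), ¬Commute (x ^ N) (y ^ N) := by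
  haveI : NeZero (N + 1) := ⟨by omega⟩
  refine ⟨N + 1, Equiv.addLeft ((N : Fin (N + 1))),
    (MulAut.conj (Equiv.swap (0 : Fin (N + 1)) 1)) (Equiv.addLeft ((N : Fin (N + 1)))), ?_⟩
  have hcast : ((N : ℕ) : Fin (N + 1)) = -1 := by
    have h0 : ((N + 1 : ℕ) : Fin (N + 1)) = 0 := Fin.natCast_self _
    push_cast at h0
    exact eq_neg_of_add_eq_zero_left h0
  have hpow : (Equiv.addLeft ((N : Fin (N + 1)))) ^ N = Equiv.addLeft (1 : Fin (N + 1)) := by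
    rw [Equiv.nsmul_addLeft, hcast, nsmul_eq_mul, mul_neg_one, hcast, neg_neg]
  rw [← map_pow, hpow, MulAut.conj_apply]
  -- value computations
  have m1 : 1 % (N + 1) = 1 := Nat.mod_eq_of_lt (by omega)
  have h1v : Fin.val (1 : Fin (N + 1)) = 1 := by rw [Fin.val_one', m1]
  have h2v : Fin.val ((1 : Fin (N + 1)) + 1) = 2 := by
    rw [Fin.val_add, h1v]; exact Nat.mod_eq_of_lt (by omega)
  have h3v : Fin.val ((1 : Fin (N + 1)) + (1 + 1)) = 3 := by
    rw [Fin.val_add, h1v, h2v]; exact Nat.mod_eq_of_lt (by omega)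
  have s2 : Equiv.swap (0 : Fin (N + 1)) 1 ((1 : Fin (N + 1)) + 1) = (1 : Fin (N + 1)) + 1 :=
    Equiv.swap_apply_of_ne_of_ne
      (fun h => by rw [h] at h2v; simp at h2v)
      (fun h => by rw [h, h1v] at h2v; omega)
  have s3 : Equiv.swap (0 : Fin (N + 1)) 1 ((1 : Fin (N + 1)) + (1 + 1))
      = (1 : Fin (N + 1)) + (1 + 1) :=
    Equiv.swap_apply_of_ne_of_ne
      (fun h => by rw [h] at h3v; simp at h3v)
      (fun h => by rw [h, h1v] at h3v; omega)
  intro hc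
  rw [commute_iff_eq] at hc
  have hval := DFunLike.congr_fun hc (1 : Fin (N + 1))
  simp only [Equiv.Perm.mul_apply, Equiv.coe_addLeft, Equiv.swap_inv,
    Equiv.swap_apply_right, add_zero, s2, s3] at hval
  have := congrArg Fin.val hval
  rw [h1v, h3v] at this
  omega

lemma noncommute_pows (N : ℕ) (hN : 1 ≤ N) :
    ∃ (M : ℕ) (x y : Equiv.Perm (Fin M)), ¬Commute (x ^ N) (y ^ N) := by
  match N, hN with
  | 1, _ =>
    exact ⟨4, Equiv.swap 0 1, Equiv.swap 1 2, by rw [commute_iff_eq]; decide⟩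
  | 2, _ =>
    exact ⟨4, Equiv.swap 0 1 * Equiv.swap 1 2, Equiv.swap 1 2 * Equiv.swap 2 3,
      by rw [commute_iff_eq]; decide⟩
  | (n + 3), _ =>
    exact noncommute_general _ (by omega)

/-- the direct sum of all finite symmetric groups satisfies the power
alternative (powers always commute) but not the uniform power alternative. -/
theorem directSum_perm_power_alternative_not_uniform :
    (∀ g h : restrictedDirectProduct ℕ (fun n => Equiv.Perm (Fin n)),
      ∃ n : ℕ, 1 ≤ n ∧ Commute (g ^ n) (h ^ n)) ∧
    (∀ N : ℕ, 1 ≤ N →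
      ∃ g h : restrictedDirectProduct ℕ (fun n => Equiv.Perm (Fin n)),
        ¬Commute (g ^ N) (h ^ N) ∧ ¬FreelyGenerateF2 (g ^ N) (h ^ N)) := by
  constructor
  · intro g h
    obtain ⟨a, ha, hga⟩ := exists_pow_eq_one_aux g
    obtain ⟨b, hb, hhb⟩ := exists_pow_eq_one_aux h
    refine ⟨a * b, Nat.one_le_iff_ne_zero.2 (by positivity), ?_⟩
    have hg1 : g ^ (a * b) = 1 := by rw [pow_mul, hga, one_pow]
    have hh1 : h ^ (a * b) = 1 := by rw [mul_comm a b, pow_mul, hhb, one_pow]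
    rw [hg1, hh1]
  · intro N hN
    obtain ⟨M, x, y, hxy⟩ := noncommute_pows N hN
    refine ⟨gsingle M x, gsingle M y, ?_, not_free_aux _ _⟩
    rw [gsingle_pow, gsingle_pow]
    exact not_commute_gsingle M (x ^ N) (y ^ N) hxy
end
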